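/- arXiv:2303.08539 — 4 statements merged into one kernel-verified Lean document; each statement's English description precedes it below -/
import Mathlib

section
/- Let h : [0,1] → [0,1] be an orientation-preserving C¹ diffeomorphism, and let f and g be C² NS-maps on [0,1] such that ln α and ln β are rationally independent, where α = f'(0) and β = g'(0). Let I = [a,b] and J = [c,d] be nondegenerate closed intervals contained in (0,1). Then there exist a constant ρ > 0 and infinitely many pairs of positive integers (k_n, l_n) such that for every n: |f^{k_n}(I) ∩ h^{-1}(g^{l_n}(J))| ≥ ρ · (f^{k_n}(b) − f^{k_n + 1}(b)) and |h(f^{k_n}(I)) ∩ g^{l_n}(J)| ≥ ρ · (g^{l_n}(d) − g^{l_n + 1}(d)), where |·| denotes the length (Lebesgue measure) of the set. -/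
open Set Filter MeasureTheory Topology

def IsNSMap (φ : ℝ → ℝ) : Prop :=
  Set.BijOn φ (Set.Icc 0 1) (Set.Icc 0 1) ∧
  φ 0 = 0 ∧ φ 1 = 1 ∧
  (∀ t ∈ Set.Icc (0 : ℝ) 1, derivWithin φ (Set.Icc 0 1) t ≠ 0) ∧
  0 < derivWithin φ (Set.Icc 0 1) 0 ∧ derivWithin φ (Set.Icc 0 1) 0 < 1 ∧
  1 < derivWithin φ (Set.Icc 0 1) 1 ∧
  ∀ t ∈ Set.Ioo (0 : ℝ) 1, φ t < t

namespace NSAux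

lemma udiff : UniqueDiffOn ℝ (Set.Icc (0:ℝ) 1) := uniqueDiffOn_Icc one_pos

lemma hasDerivAt_interior {φ : ℝ → ℝ} (h1 : ContDiffOn ℝ 1 φ (Icc 0 1)) {x : ℝ}
    (hx : x ∈ Ioo (0:ℝ) 1) : HasDerivAt φ (derivWithin φ (Icc 0 1) x) x := by
  have hmem : Icc (0:ℝ) 1 ∈ 𝓝 x := Icc_mem_nhds hx.1 hx.2
  have hd : DifferentiableWithinAt ℝ φ (Icc 0 1) x :=
    h1.differentiableOn one_ne_zero x (Ioo_subset_Icc_self hx)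
  exact hd.hasDerivWithinAt.hasDerivAt hmem

lemma mono_aux {φ : ℝ → ℝ} (h1 : ContDiffOn ℝ 1 φ (Icc 0 1))
    (hpos : ∀ t ∈ Set.Icc (0:ℝ) 1, 0 < derivWithin φ (Set.Icc 0 1) t) :
    StrictMonoOn φ (Set.Icc 0 1) := by
  refine strictMonoOn_of_deriv_pos (convex_Icc 0 1) h1.continuousOn ?_
  intro x hx
  rw [interior_Icc] at hx
  have := (hasDerivAt_interior h1 hx).deriv
  rw [this]
  exact hpos x (Ioo_subset_Icc_self hx)

lemma mvt {φ : ℝ → ℝ} (h1 : ContDiffOn ℝ 1 φ (Icc 0 1)) {u v : ℝ}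
    (h0 : 0 ≤ u) (huv : u < v) (h1v : v ≤ 1) :
    ∃ ξ ∈ Ioo u v, φ v - φ u = derivWithin φ (Icc 0 1) ξ * (v - u) := by
  have hsub : Icc u v ⊆ Icc (0:ℝ) 1 := Icc_subset_Icc h0 h1v
  have hsub' : Ioo u v ⊆ Ioo (0:ℝ) 1 := Ioo_subset_Ioo h0 h1v
  obtain ⟨ξ, hξ, hs⟩ := exists_hasDerivAt_eq_slope φ (fun x => derivWithin φ (Icc 0 1) x)
    huv (h1.continuousOn.mono hsub) (fun x hx => hasDerivAt_interior h1 (hsub' hx))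
  refine ⟨ξ, hξ, ?_⟩
  rw [hs, div_mul_cancel₀]
  exact sub_ne_zero.2 huv.ne'

lemma deriv_pos {φ : ℝ → ℝ} (h2 : ContDiffOn ℝ 2 φ (Icc 0 1)) (hNS : IsNSMap φ) :
    ∀ t ∈ Set.Icc (0:ℝ) 1, 0 < derivWithin φ (Set.Icc 0 1) t := by
  intro t ht
  by_contra hle
  push_neg at hle
  have hc : ContinuousOn (derivWithin φ (Icc 0 1)) (Icc 0 1) :=
    h2.continuousOn_derivWithin udiff (by norm_num)
  have h0 : (0:ℝ) ∈ Icc (0:ℝ) 1 := by norm_num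
  have hmem : (0:ℝ) ∈ uIcc (derivWithin φ (Icc 0 1) 0) (derivWithin φ (Icc 0 1) t) := by
    rcases hNS with ⟨-, -, -, -, hpos0, -⟩
    exact mem_uIcc.2 (Or.inr ⟨hle, le_of_lt hpos0⟩)
  have husub : uIcc (0:ℝ) t ⊆ Icc 0 1 := by
    rw [uIcc_of_le ht.1]; exact Icc_subset_Icc le_rfl ht.2
  obtain ⟨s, hs, hs0⟩ := intermediate_value_uIcc (hc.mono husub) hmem
  exact hNS.2.2.2.1 s (husub hs) hs0

lemma mono {φ : ℝ → ℝ} (h2 : ContDiffOn ℝ 2 φ (Icc 0 1)) (hNS : IsNSMap φ) :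
    StrictMonoOn φ (Set.Icc 0 1) :=
  mono_aux (h2.of_le one_le_two) (deriv_pos h2 hNS)

lemma deriv_lip {φ : ℝ → ℝ} (h2 : ContDiffOn ℝ 2 φ (Icc 0 1)) :
    ∃ L : ℝ, 0 ≤ L ∧ ∀ t ∈ Set.Icc (0:ℝ) 1,
      |derivWithin φ (Icc 0 1) t - derivWithin φ (Icc 0 1) 0| ≤ L * t := by
  have hd1 : ContDiffOn ℝ 1 (derivWithin φ (Icc 0 1)) (Icc 0 1) :=
    h2.derivWithin udiff (by norm_num)
  have hc : ContinuousOn (derivWithin (derivWithin φ (Icc 0 1)) (Icc 0 1)) (Icc 0 1) :=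
    hd1.continuousOn_derivWithin udiff le_rfl
  obtain ⟨C, hC⟩ := isCompact_Icc.exists_bound_of_continuousOn hc
  refine ⟨max C 0, le_max_right _ _, fun t ht => ?_⟩
  have hb : ∀ x ∈ Icc (0:ℝ) 1,
      ‖derivWithin (derivWithin φ (Icc 0 1)) (Icc 0 1) x‖ ≤ max C 0 :=
    fun x hx => (hC x hx).trans (le_max_left _ _)
  have key := Convex.norm_image_sub_le_of_norm_derivWithin_le (C := max C 0)
    (hd1.differentiableOn one_ne_zero) hb (convex_Icc 0 1)
    (by norm_num : (0:ℝ) ∈ Icc (0:ℝ) 1) ht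
  simpa [Real.norm_eq_abs, abs_of_nonneg ht.1] using key

end NSAux

set_option linter.unusedSectionVars false
section Chunk2
variable {φ : ℝ → ℝ}

-- stand-ins for chunk1 facts
variable (hmono : StrictMonoOn φ (Set.Icc 0 1))
variable (hmaps : Set.MapsTo φ (Set.Icc 0 1) (Set.Icc 0 1))
variable (hφ0 : φ 0 = 0)
variable (hlt : ∀ t ∈ Set.Ioo (0 : ℝ) 1, φ t < t)
variable (hcont : ContinuousOn φ (Set.Icc 0 1))

include hmono hmaps hφ0 hlt in
lemma ns_map_Ioo : ∀ x ∈ Ioo (0:ℝ) 1, φ x ∈ Ioo (0:ℝ) 1 := by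
  intro x hx
  have h0 : (0:ℝ) ∈ Icc (0:ℝ) 1 := by norm_num
  have hxI : x ∈ Icc (0:ℝ) 1 := Ioo_subset_Icc_self hx
  have : φ 0 < φ x := hmono h0 hxI hx.1
  rw [hφ0] at this
  exact ⟨this, lt_trans (hlt x hx) hx.2⟩

include hmono hmaps hφ0 hlt in
lemma ns_iter_Ioo : ∀ x ∈ Ioo (0:ℝ) 1, ∀ k, φ^[k] x ∈ Ioo (0:ℝ) 1 := by
  intro x hx k
  induction k with
  | zero => simpa using hx
  | succ n ih =>
    rw [Function.iterate_succ_apply']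
    exact ns_map_Ioo hmono hmaps hφ0 hlt _ ih

include hmono hmaps hφ0 hlt in
lemma ns_iter_succ_lt : ∀ x ∈ Ioo (0:ℝ) 1, ∀ k, φ^[k+1] x < φ^[k] x := by
  intro x hx k
  rw [Function.iterate_succ_apply']
  exact hlt _ (ns_iter_Ioo hmono hmaps hφ0 hlt x hx k)

include hmono hmaps hφ0 hlt in
lemma ns_iter_anti {x : ℝ} (hx : x ∈ Ioo (0:ℝ) 1) :
    StrictAnti (fun k => φ^[k] x) :=
  strictAnti_nat_of_succ_lt (fun k => ns_iter_succ_lt hmono hmaps hφ0 hlt x hx k)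

include hmono hmaps hφ0 hlt in
lemma ns_iter_lt_pt {x y : ℝ} (hx : x ∈ Ioo (0:ℝ) 1) (hy : y ∈ Ioo (0:ℝ) 1) (hxy : x < y) :
    ∀ k, φ^[k] x < φ^[k] y := by
  intro k
  induction k with
  | zero => simpa using hxy
  | succ n ih =>
    rw [Function.iterate_succ_apply', Function.iterate_succ_apply']
    exact hmono (Ioo_subset_Icc_self (ns_iter_Ioo hmono hmaps hφ0 hlt x hx n))
      (Ioo_subset_Icc_self (ns_iter_Ioo hmono hmaps hφ0 hlt y hy n)) ih

include hmono hmaps hφ0 hlt hcont in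
lemma ns_iter_tendsto_zero {x : ℝ} (hx : x ∈ Ioo (0:ℝ) 1) :
    Tendsto (fun k => φ^[k] x) atTop (𝓝 0) := by
  set u : ℕ → ℝ := fun k => φ^[k] x with hu
  have humem : ∀ k, u k ∈ Ioo (0:ℝ) 1 := fun k => ns_iter_Ioo hmono hmaps hφ0 hlt x hx k
  have hanti : Antitone u := (ns_iter_anti hmono hmaps hφ0 hlt hx).antitone
  have hbdd : BddBelow (Set.range u) := ⟨0, fun y ⟨k, hk⟩ => hk ▸ (humem k).1.le⟩
  have htd : Tendsto u atTop (𝓝 (⨅ k, u k)) := tendsto_atTop_ciInf hanti hbdd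
  set L := ⨅ k, u k with hL
  have hL0 : 0 ≤ L := le_ciInf (fun k => (humem k).1.le)
  have hLx : L ≤ x := ciInf_le hbdd 0
  have hfix : φ L = L := by
    have h1 : Tendsto (fun k => u (k+1)) atTop (𝓝 L) := htd.comp (tendsto_add_atTop_nat 1)
    have h2 : Tendsto (fun k => φ (u k)) atTop (𝓝 (φ L)) := by
      have hLmem : L ∈ Icc (0:ℝ) 1 := ⟨hL0, hLx.trans hx.2.le⟩
      have hcw : ContinuousWithinAt φ (Icc 0 1) L := hcont L hLmem
      refine hcw.tendsto.comp ?_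
      rw [tendsto_nhdsWithin_iff]
      exact ⟨htd, Eventually.of_forall fun k => Ioo_subset_Icc_self (humem k)⟩
    have : (fun k => u (k+1)) = fun k => φ (u k) := by
      funext k; exact Function.iterate_succ_apply' φ k x
    rw [this] at h1
    exact tendsto_nhds_unique h2 h1
  rcases eq_or_lt_of_le hL0 with hL0' | hL0'
  · rwa [← hL0'] at htd
  · exfalso
    have : L ∈ Ioo (0:ℝ) 1 := ⟨hL0', lt_of_le_of_lt hLx hx.2⟩
    exact absurd hfix (ne_of_lt (hlt L this))

end Chunk2

section Chunk3
set_option linter.unusedSectionVars false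
variable {φ : ℝ → ℝ}
variable (hmono : StrictMonoOn φ (Set.Icc 0 1))
variable (hmaps : Set.MapsTo φ (Set.Icc 0 1) (Set.Icc 0 1))
variable (hφ0 : φ 0 = 0)
variable (hlt : ∀ t ∈ Set.Ioo (0 : ℝ) 1, φ t < t)
variable (h1 : ContDiffOn ℝ 1 φ (Set.Icc 0 1))

-- abbreviation
local notation "φ'" => derivWithin φ (Set.Icc 0 1)

include h1 hφ0 in
/-- value expansion via MVT from 0 : `φ y = φ' ξ * y`. -/
lemma ns_val {y : ℝ} (h0y : 0 < y) (hy1 : y ≤ 1) :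
    ∃ ξ ∈ Ioo 0 y, φ y = φ' ξ * y := by
  obtain ⟨ξ, hξ, he⟩ := NSAux.mvt h1 le_rfl h0y hy1
  exact ⟨ξ, hξ, by simpa [hφ0] using he⟩

include hmono hmaps hφ0 hlt h1 in
/-- geometric decay and summability of the iterates -/
lemma ns_summable {L α : ℝ} (hL : 0 ≤ L) (hα0 : 0 < α) (hα1 : α < 1)
    (hderiv0 : φ' 0 = α)
    (hlip : ∀ t ∈ Set.Icc (0:ℝ) 1, |φ' t - φ' 0| ≤ L * t)
    {x : ℝ} (hx : x ∈ Ioo (0:ℝ) 1) :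
    Summable (fun k => φ^[k] x) := by
  set lam : ℝ := (1 + α)/2 with hlam
  have hlam1 : lam < 1 := by rw [hlam]; linarith
  have hlam0 : 0 ≤ lam := by rw [hlam]; linarith
  set δ : ℝ := min 1 ((1-α)/(2*(L+1))) with hδ
  have hδpos : 0 < δ := lt_min one_pos (div_pos (by linarith) (by positivity))
  have hδ1 : δ ≤ 1 := min_le_left _ _
  have hcontr : ∀ y : ℝ, 0 < y → y ≤ δ → φ y ≤ lam * y := by
    intro y hy0 hyδ
    obtain ⟨ξ, hξ, he⟩ := ns_val hφ0 h1 hy0 (hyδ.trans hδ1)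
    have hξI : ξ ∈ Icc (0:ℝ) 1 := ⟨hξ.1.le, hξ.2.le.trans (hyδ.trans hδ1)⟩
    have hb : φ' ξ ≤ α + L * ξ := by
      have := hlip ξ hξI
      rw [hderiv0] at this
      have := abs_le.1 this
      linarith [this.2]
    have hLξ : L * ξ ≤ (1-α)/2 := by
      have hξδ : ξ ≤ δ := hξ.2.le.trans hyδ
      have h2 : δ ≤ (1-α)/(2*(L+1)) := min_le_right _ _
      have : L * ξ ≤ L * ((1-α)/(2*(L+1))) :=
        mul_le_mul_of_nonneg_left (hξδ.trans h2) hL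
      have h3 : L * ((1-α)/(2*(L+1))) ≤ (1-α)/2 := by
        rw [mul_div_assoc', div_le_div_iff₀ (by positivity) (by norm_num)]
        nlinarith [mul_nonneg hL (by linarith : (0:ℝ) ≤ 1 - α)]
      linarith
    calc φ y = φ' ξ * y := he
      _ ≤ lam * y := by
          apply mul_le_mul_of_nonneg_right _ hy0.le
          rw [hlam]; linarith
  -- eventually below δ
  have htd := ns_iter_tendsto_zero hmono hmaps hφ0 hlt h1.continuousOn hx
  have hev : ∀ᶠ k in atTop, φ^[k] x < δ := htd.eventually_lt_const hδpos
  obtain ⟨K, hK⟩ := eventually_atTop.1 hev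
  have hgeo : ∀ j, φ^[K + j] x ≤ δ * lam ^ j := by
    intro j
    induction j with
    | zero => simpa using (hK K le_rfl).le
    | succ n ih =>
      have hmem := ns_iter_Ioo hmono hmaps hφ0 hlt x hx (K + n)
      have hle : φ^[K+n] x ≤ δ := ih.trans (by
        calc δ * lam ^ n ≤ δ * 1 := by
              apply mul_le_mul_of_nonneg_left _ hδpos.le
              exact pow_le_one₀ hlam0 hlam1.le
          _ = δ := mul_one δ)
      have : φ^[K + (n+1)] x = φ (φ^[K+n] x) := by
        rw [show K + (n+1) = (K + n) + 1 by ring, Function.iterate_succ_apply']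
      rw [this]
      calc φ (φ^[K+n] x) ≤ lam * φ^[K+n] x := hcontr _ hmem.1 hle
        _ ≤ lam * (δ * lam ^ n) := mul_le_mul_of_nonneg_left ih hlam0
        _ = δ * lam ^ (n+1) := by ring
  have hsum2 : Summable (fun j => φ^[j + K] x) :=
    Summable.of_nonneg_of_le
      (fun j => (ns_iter_Ioo hmono hmaps hφ0 hlt x hx (j + K)).1.le)
      (fun j => by rw [Nat.add_comm j K]; exact hgeo j)
      ((summable_geometric_of_lt_one hlam0 hlam1).mul_left δ)
  exact (summable_nat_add_iff K).1 hsum2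

end Chunk3
section Chunk4

lemma log_abs_le {q e : ℝ} (hq : |q - 1| ≤ e) (he : e ≤ 1/2) : |Real.log q| ≤ 2 * e := by
  have he0 : 0 ≤ e := le_trans (abs_nonneg _) hq
  obtain ⟨h1, h2⟩ := abs_le.1 hq
  have hq0 : 0 < q := by linarith
  rw [abs_le]
  constructor
  · have hinv : Real.log q⁻¹ ≤ q⁻¹ - 1 := Real.log_le_sub_one_of_pos (by positivity)
    rw [Real.log_inv] at hinv
    have hq12 : (1:ℝ)/2 ≤ q := by linarith
    have hqq : q⁻¹ - 1 = (1 - q)/q := by field_simp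
    rw [hqq] at hinv
    have hb : (1 - q)/q ≤ 2 * e := by
      rw [div_le_iff₀ hq0]
      nlinarith
    linarith
  · have := Real.log_le_sub_one_of_pos hq0
    linarith

lemma one_sub_ge_exp {t : ℝ} (h0 : 0 ≤ t) (h2 : t ≤ 1/2) : Real.exp (-(2*t)) ≤ 1 - t := by
  have h1t : 0 < 1 - t := by linarith
  have hinv := Real.log_le_sub_one_of_pos (by positivity : 0 < (1-t)⁻¹)
  rw [Real.log_inv] at hinv
  have hb : (1-t)⁻¹ - 1 ≤ 2 * t := by
    rw [inv_eq_one_div, div_sub_one h1t.ne', div_le_iff₀ h1t]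
    nlinarith
  have hlog : -(2*t) ≤ Real.log (1-t) := by linarith
  calc Real.exp (-(2*t)) ≤ Real.exp (Real.log (1-t)) := Real.exp_le_exp.2 hlog
    _ = 1 - t := Real.exp_log h1t

set_option linter.unusedSectionVars false
variable {φ : ℝ → ℝ}
variable (hmono : StrictMonoOn φ (Set.Icc 0 1))
variable (hmaps : Set.MapsTo φ (Set.Icc 0 1) (Set.Icc 0 1))
variable (hφ0 : φ 0 = 0)
variable (hlt : ∀ t ∈ Set.Ioo (0 : ℝ) 1, φ t < t)
variable (h1 : ContDiffOn ℝ 1 φ (Set.Icc 0 1))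
variable (hdpos : ∀ t ∈ Set.Icc (0:ℝ) 1, 0 < derivWithin φ (Set.Icc 0 1) t)

local notation "φ'" => derivWithin φ (Set.Icc 0 1)

include hmono hmaps hφ0 hlt h1 hdpos in
lemma ns_koenigs {L α : ℝ} (hL : 0 ≤ L) (hα0 : 0 < α) (hα1 : α < 1)
    (hderiv0 : φ' 0 = α)
    (hlip : ∀ t ∈ Set.Icc (0:ℝ) 1, |φ' t - φ' 0| ≤ L * t)
    {x : ℝ} (hx : x ∈ Set.Ioo (0:ℝ) 1) :
    ∃ c : ℝ, 0 < c ∧ Filter.Tendsto (fun k => φ^[k] x / α^k) Filter.atTop (nhds c) := by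
  set u : ℕ → ℝ := fun k => φ^[k] x with hu
  have humem : ∀ k, u k ∈ Set.Ioo (0:ℝ) 1 := fun k => ns_iter_Ioo hmono hmaps hφ0 hlt x hx k
  have hαk : ∀ k:ℕ, (0:ℝ) < α ^ k := fun k => pow_pos hα0 k
  set r : ℕ → ℝ := fun k => u k / α^k with hr
  have hrpos : ∀ k, 0 < r k := fun k => div_pos (humem k).1 (hαk k)
  have claim : ∀ k, ∃ qk : ℝ, 0 < qk ∧ r (k+1) = qk * r k ∧ |qk - 1| ≤ (L/α) * u k := by
    intro k
    obtain ⟨ξ, hξ, he⟩ := ns_val hφ0 h1 (humem k).1 (humem k).2.le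
    have hξI : ξ ∈ Set.Icc (0:ℝ) 1 := ⟨hξ.1.le, hξ.2.le.trans (humem k).2.le⟩
    refine ⟨φ' ξ / α, div_pos (hdpos ξ hξI) hα0, ?_, ?_⟩
    · show u (k+1) / α^(k+1) = (φ' ξ / α) * (u k / α^k)
      have hsucc : u (k+1) = φ (u k) := Function.iterate_succ_apply' φ k x
      rw [hsucc, he, pow_succ]
      field_simp
    · have hlb := hlip ξ hξI
      rw [hderiv0] at hlb
      have habs : |φ' ξ / α - 1| = |φ' ξ - α| / α := by
        have hdiff : φ' ξ / α - 1 = (φ' ξ - α)/α := by field_simp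
        rw [hdiff, abs_div, abs_of_pos hα0]
      rw [habs, div_le_iff₀ hα0]
      calc |φ' ξ - α| ≤ L * ξ := hlb
        _ ≤ L / α * u k * α := by
            have heq2 : L / α * u k * α = L * u k := by field_simp
            rw [heq2]
            exact mul_le_mul_of_nonneg_left hξ.2.le hL
  choose q hq0 hqeq hqb using claim
  set dseq : ℕ → ℝ := fun k => Real.log (r (k+1)) - Real.log (r k) with hd
  have hdlog : ∀ k, dseq k = Real.log (q k) := by
    intro k
    show Real.log (r (k+1)) - Real.log (r k) = _
    rw [hqeq k, Real.log_mul (hq0 k).ne' (hrpos k).ne']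
    ring
  have hSu : Summable u := ns_summable hmono hmaps hφ0 hlt h1 hL hα0 hα1 hderiv0 hlip hx
  have hub : ∀ᶠ k in Filter.atTop, ‖dseq k‖ ≤ (2*L/α) * u k := by
    have hδpos : (0:ℝ) < α/(2*(L+1)) := by positivity
    have hev : ∀ᶠ k in Filter.atTop, u k < α/(2*(L+1)) :=
      (ns_iter_tendsto_zero hmono hmaps hφ0 hlt h1.continuousOn hx).eventually_lt_const hδpos
    filter_upwards [hev] with k hk
    have ht2 : (L/α) * u k ≤ 1/2 := by
      have h1' : L * u k ≤ L * (α/(2*(L+1))) := mul_le_mul_of_nonneg_left hk.le hL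
      have h2' : L * (α/(2*(L+1))) ≤ α/2 := by
        rw [mul_div_assoc', div_le_div_iff₀ (by positivity) (by norm_num)]
        nlinarith
      rw [div_mul_eq_mul_div, div_le_iff₀ hα0]
      linarith
    have := log_abs_le (hqb k) ht2
    rw [hdlog k, Real.norm_eq_abs]
    calc |Real.log (q k)| ≤ 2 * ((L/α) * u k) := this
      _ = (2*L/α) * u k := by ring
  have hsum : Summable dseq :=
    Summable.of_norm_bounded_eventually_nat (hSu.mul_left (2*L/α)) hub
  have htel : ∀ k, ∑ j ∈ Finset.range k, dseq j = Real.log (r k) - Real.log (r 0) :=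
    fun k => Finset.sum_range_sub (fun i => Real.log (r i)) k
  have hpart := hsum.hasSum.tendsto_sum_nat
  set T := ∑' k, dseq k with hT
  have hlog : Filter.Tendsto (fun k => Real.log (r k)) Filter.atTop (nhds (T + Real.log (r 0))) := by
    have h5 : Filter.Tendsto (fun k => (∑ j ∈ Finset.range k, dseq j) + Real.log (r 0))
        Filter.atTop (nhds (T + Real.log (r 0))) := hpart.add_const _
    refine h5.congr fun k => ?_
    rw [htel k]; ring
  refine ⟨Real.exp (T + Real.log (r 0)), Real.exp_pos _, ?_⟩
  have h6 := (Real.continuous_exp.tendsto _).comp hlog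
  exact h6.congr fun k => Real.exp_log (hrpos k)

include hmono hmaps hφ0 hlt h1 hdpos in
lemma ns_sep {L α : ℝ} (hL : 0 ≤ L) (hα0 : 0 < α) (hα1 : α < 1)
    (hderiv0 : φ' 0 = α)
    (hlip : ∀ t ∈ Set.Icc (0:ℝ) 1, |φ' t - φ' 0| ≤ L * t)
    {x y : ℝ} (hx : x ∈ Set.Ioo (0:ℝ) 1) (hy : y ∈ Set.Ioo (0:ℝ) 1) (hxy : x < y) :
    ∃ ε : ℝ, 0 < ε ∧ ∀ᶠ k in Filter.atTop, ε ≤ (φ^[k] y - φ^[k] x) / α^k := by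
  set u : ℕ → ℝ := fun k => φ^[k] x with hu
  set v : ℕ → ℝ := fun k => φ^[k] y with hv
  have humem : ∀ k, u k ∈ Set.Ioo (0:ℝ) 1 := fun k => ns_iter_Ioo hmono hmaps hφ0 hlt x hx k
  have hvmem : ∀ k, v k ∈ Set.Ioo (0:ℝ) 1 := fun k => ns_iter_Ioo hmono hmaps hφ0 hlt y hy k
  have huv : ∀ k, u k < v k := fun k => ns_iter_lt_pt hmono hmaps hφ0 hlt hx hy hxy k
  have hαk : ∀ k:ℕ, (0:ℝ) < α ^ k := fun k => pow_pos hα0 k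
  have hSv : Summable v := ns_summable hmono hmaps hφ0 hlt h1 hL hα0 hα1 hderiv0 hlip hy
  set S := ∑' k, v k with hS
  set c2 : ℝ := 2*L/α with hc2
  have hc2nn : 0 ≤ c2 := by positivity
  have hδpos : (0:ℝ) < α/(2*(L+1)) := by positivity
  obtain ⟨K, hK⟩ := Filter.eventually_atTop.1
    ((ns_iter_tendsto_zero hmono hmaps hφ0 hlt h1.continuousOn hy).eventually_lt_const hδpos)
  have claim : ∀ j : ℕ, (v K - u K) * α^j *
      Real.exp (-(c2 * ∑ i ∈ Finset.range j, v (K+i))) ≤ v (K+j) - u (K+j) := by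
    intro j
    induction j with
    | zero => simp
    | succ n ih =>
      obtain ⟨ξ, hξ, he⟩ := NSAux.mvt h1 (humem (K+n)).1.le (huv (K+n)) (hvmem (K+n)).2.le
      have hξI : ξ ∈ Set.Icc (0:ℝ) 1 :=
        ⟨(humem (K+n)).1.le.trans hξ.1.le, hξ.2.le.trans (hvmem (K+n)).2.le⟩
      have hlb := hlip ξ hξI
      rw [hderiv0] at hlb
      have hφ'lb : α - L * v (K+n) ≤ φ' ξ := by
        have h1' := (abs_le.1 hlb).1
        have h2' : L * ξ ≤ L * v (K+n) := mul_le_mul_of_nonneg_left hξ.2.le hL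
        linarith
      have htle : (L/α) * v (K+n) ≤ 1/2 := by
        have hvlt := hK (K+n) (Nat.le_add_right K n)
        have h1' : L * v (K+n) ≤ L * (α/(2*(L+1))) := mul_le_mul_of_nonneg_left hvlt.le hL
        have h2' : L * (α/(2*(L+1))) ≤ α/2 := by
          rw [mul_div_assoc', div_le_div_iff₀ (by positivity) (by norm_num)]
          nlinarith
        rw [div_mul_eq_mul_div, div_le_iff₀ hα0]
        linarith
      have htnn : 0 ≤ (L/α) * v (K+n) := by
        have := (hvmem (K+n)).1.le
        positivity
      have hexp := one_sub_ge_exp htnn htle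
      have hφ'lb2 : α * Real.exp (-(c2 * v (K+n))) ≤ φ' ξ := by
        have heq : -(2 * ((L/α) * v (K+n))) = -(c2 * v (K+n)) := by
          rw [hc2]; ring
        have h3' : α * Real.exp (-(c2 * v (K+n))) ≤ α * (1 - (L/α) * v (K+n)) := by
          rw [← heq]
          exact mul_le_mul_of_nonneg_left hexp hα0.le
        have h4' : α * (1 - (L/α) * v (K+n)) = α - L * v (K+n) := by
          field_simp
        linarith
      have hiter : v (K+(n+1)) - u (K+(n+1)) = φ' ξ * (v (K+n) - u (K+n)) := by
        have h5' : v (K+(n+1)) = φ (v (K+n)) := Function.iterate_succ_apply' φ (K+n) y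
        have h6' : u (K+(n+1)) = φ (u (K+n)) := Function.iterate_succ_apply' φ (K+n) x
        rw [h5', h6']
        linarith [he]
      have hrhs_nn : 0 ≤ (v K - u K) * α^n *
          Real.exp (-(c2 * ∑ i ∈ Finset.range n, v (K+i))) :=
        mul_nonneg (mul_nonneg (sub_pos.2 (huv K)).le (pow_nonneg hα0.le n))
          (Real.exp_nonneg _)
      rw [hiter]
      calc (v K - u K) * α^(n+1) * Real.exp (-(c2 * ∑ i ∈ Finset.range (n+1), v (K+i)))
          = (α * Real.exp (-(c2 * v (K+n)))) *
            ((v K - u K) * α^n * Real.exp (-(c2 * ∑ i ∈ Finset.range n, v (K+i)))) := by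
            rw [Finset.sum_range_succ, pow_succ]
            rw [show -(c2 * (∑ i ∈ Finset.range n, v (K+i) + v (K+n)))
              = -(c2 * ∑ i ∈ Finset.range n, v (K+i)) + -(c2 * v (K+n)) by ring]
            rw [Real.exp_add]
            ring
        _ ≤ φ' ξ * (v (K+n) - u (K+n)) := by
            apply mul_le_mul hφ'lb2 ih hrhs_nn (le_trans (by positivity) hφ'lb2)
    -- end induction
  have hsumle : ∀ j : ℕ, ∑ i ∈ Finset.range j, v (K+i) ≤ S := by
    intro j
    have h7 : ∑ i ∈ Finset.range j, v (K+i) = ∑ m ∈ Finset.Ico K (K+j), v m := by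
      rw [Finset.sum_Ico_eq_sum_range]
      simp
    rw [h7]
    calc ∑ m ∈ Finset.Ico K (K+j), v m ≤ ∑ m ∈ Finset.range (K+j), v m := by
          apply Finset.sum_le_sum_of_subset_of_nonneg
          · intro m hm
            rw [Finset.mem_range]
            exact (Finset.mem_Ico.1 hm).2
          · intro m _ _
            exact (hvmem m).1.le
      _ ≤ S := Summable.sum_le_tsum _ (fun m _ => (hvmem m).1.le) hSv
  refine ⟨(v K - u K) * Real.exp (-(c2 * S)) / α^K,
    div_pos (mul_pos (sub_pos.2 (huv K)) (Real.exp_pos _)) (hαk K), ?_⟩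
  rw [Filter.eventually_atTop]
  refine ⟨K, fun k hk => ?_⟩
  obtain ⟨j, rfl⟩ := Nat.exists_eq_add_of_le hk
  rw [le_div_iff₀ (hαk (K + j))]
  have hexpS : Real.exp (-(c2 * S)) ≤ Real.exp (-(c2 * ∑ i ∈ Finset.range j, v (K+i))) := by
    apply Real.exp_le_exp.2
    have := mul_le_mul_of_nonneg_left (hsumle j) hc2nn
    linarith
  calc (v K - u K) * Real.exp (-(c2 * S)) / α^K * α^(K+j)
      = (v K - u K) * α^j * Real.exp (-(c2 * S)) := by
        rw [pow_add]
        field_simp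
    _ ≤ (v K - u K) * α^j * Real.exp (-(c2 * ∑ i ∈ Finset.range j, v (K+i))) :=
        mul_le_mul_of_nonneg_left hexpS
          (mul_nonneg (sub_pos.2 (huv K)).le (pow_nonneg hα0.le j))
    _ ≤ v (K+j) - u (K+j) := claim j

end Chunk4

section Chunk5

lemma descend {η w₁ w₂ x : ℝ} (h0 : 0 < η) (hlt : η < w₂ - w₁) (hx : w₁ ≤ x) :
    ∃ j : ℕ, w₁ ≤ x - j*η ∧ x - j*η ≤ w₂ ∧ x - w₂ ≤ j*η := by
  by_cases hcase : x ≤ w₂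
  · exact ⟨0, by simpa using hx, by simpa using hcase, by simp; linarith⟩
  · push_neg at hcase
    set cz : ℤ := ⌈(x - w₂)/η⌉ with hc
    have hc0 : 0 < cz := Int.ceil_pos.2 (div_pos (by linarith) h0)
    refine ⟨cz.toNat, ?_, ?_, ?_⟩ <;>
    · have hjz : (cz.toNat : ℝ) = (cz:ℝ) := by exact_mod_cast Int.toNat_of_nonneg hc0.le
      have h1 : x - w₂ ≤ (cz:ℝ) * η := (div_le_iff₀ h0).1 (Int.le_ceil _)
      have h2 : (cz:ℝ) * η < x - w₂ + η := by
        have hh : (x - w₂)/η + 1 = (x - w₂ + η)/η := by field_simp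
        have h3 : (cz:ℝ) < (x - w₂ + η)/η := by rw [← hh]; exact Int.ceil_lt_add_one _
        calc (cz:ℝ) * η < (x - w₂ + η)/η * η := mul_lt_mul_of_pos_right h3 h0
          _ = x - w₂ + η := by field_simp
      rw [hjz]
      linarith

lemma small_pos {θ : ℝ} (hθ : Irrational θ) {ε : ℝ} (hε : 0 < ε) :
    ∃ n m : ℤ, 0 < n * θ - m ∧ n * θ - m < ε := by
  set S : AddSubgroup ℝ := AddSubgroup.closure {1, θ} with hS
  have hdense : Dense (S : Set ℝ) := by
    rcases S.dense_or_cyclic with hd | ⟨g, hg⟩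
    · exact hd
    · exfalso
      have h1 : (1:ℝ) ∈ S := AddSubgroup.subset_closure (by simp)
      have hθS : θ ∈ S := AddSubgroup.subset_closure (by simp)
      rw [hg, AddSubgroup.mem_closure_singleton] at h1 hθS
      obtain ⟨p, hp⟩ := h1
      obtain ⟨q, hq⟩ := hθS
      have hp0 : p ≠ 0 := by
        rintro rfl
        simpa using hp
      have hpg : (p:ℝ) * g = 1 := by rw [← hp]; simp [zsmul_eq_mul]
      have hqg : (q:ℝ) * g = θ := by rw [← hq]; simp [zsmul_eq_mul]
      have hkey : (p:ℝ) * θ = q := by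
        calc (p:ℝ) * θ = (p:ℝ) * ((q:ℝ)*g) := by rw [hqg]
          _ = (q:ℝ) * ((p:ℝ)*g) := by ring
          _ = q := by rw [hpg, mul_one]
      have hpr0 : (p:ℝ) ≠ 0 := Int.cast_ne_zero.2 hp0
      have hrat : θ = ((q:ℚ)/(p:ℚ) : ℚ) := by
        push_cast
        field_simp
        linarith [hkey]
      exact hθ ⟨(q:ℚ)/(p:ℚ), hrat.symm⟩
  obtain ⟨z, hzS, hz⟩ := hdense.exists_between hε
  have hzmem : z ∈ AddSubgroup.closure ({1, θ} : Set ℝ) := hzS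
  rw [AddSubgroup.mem_closure_pair] at hzmem
  obtain ⟨m, n, hmn⟩ := hzmem
  simp only [zsmul_eq_mul, mul_one] at hmn
  refine ⟨n, -m, ?_, ?_⟩ <;>
  · push_cast
    have := hz.1
    have := hz.2
    linarith [hmn]

lemma rot_hit {θ : ℝ} (hθpos : 0 < θ) (hθ : Irrational θ) {w₁ w₂ : ℝ} (hw : w₁ < w₂) (M : ℕ) :
    ∃ k l : ℕ, M ≤ k ∧ M ≤ l ∧ w₁ ≤ (l:ℝ) - (k:ℝ)*θ ∧ (l:ℝ) - (k:ℝ)*θ ≤ w₂ := by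
  have hεpos : 0 < min ((w₂ - w₁)/2) (1/2) := lt_min (by linarith) (by norm_num)
  obtain ⟨n, m, hη0, hηε⟩ := small_pos hθ hεpos
  have hη12 : (n:ℝ)*θ - m ≤ 1/2 := hηε.le.trans (min_le_right _ _)
  have hηw : (n:ℝ)*θ - m < w₂ - w₁ :=
    lt_of_lt_of_le hηε ((min_le_left _ _).trans (by linarith))
  have habs1 : w₁ ≤ |w₁| := le_abs_self w₁
  have habs1' : -|w₁| ≤ w₁ := neg_abs_le w₁
  have habs2 : w₂ ≤ |w₂| := le_abs_self w₂
  have habs2' : -|w₂| ≤ w₂ := neg_abs_le w₂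
  have habs1nn : (0:ℝ) ≤ |w₁| := abs_nonneg w₁
  have habs2nn : (0:ℝ) ≤ |w₂| := abs_nonneg w₂
  have hMnn : (0:ℝ) ≤ (M:ℝ) := Nat.cast_nonneg M
  have hn0 : n ≠ 0 := by
    rintro rfl
    have hm' : (m:ℝ) < 0 := by push_cast at hη0; linarith
    have hmz : m < 0 := by exact_mod_cast hm'
    have hm1 : (m:ℝ) ≤ -1 := by exact_mod_cast (by omega : m ≤ -1)
    push_cast at hη12
    linarith
  rcases hn0.lt_or_gt with hneg | hpos
  · -- n < 0 : ascending case
    have hn1 : (1:ℤ) ≤ -n := by omega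
    have hm1 : (1:ℤ) ≤ -m := by
      have hnθ : (n:ℝ) * θ < 0 :=
        mul_neg_of_neg_of_pos (by exact_mod_cast hneg : (n:ℝ) < 0) hθpos
      have h9 : (m:ℝ) < 0 := by linarith
      have : m < 0 := by exact_mod_cast h9
      omega
    have hm1' : (1:ℝ) ≤ -(m:ℝ) := by exact_mod_cast hm1
    have hn1' : (1:ℝ) ≤ -(n:ℝ) := by exact_mod_cast hn1
    obtain ⟨N₁, hN₁ge⟩ : ∃ N : ℕ, 2*|w₁| + |w₂| + 2*(M:ℝ) + 2 ≤ (N:ℝ) :=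
      ⟨⌈2*|w₁| + |w₂| + 2*(M:ℝ) + 2⌉₊, Nat.le_ceil _⟩
    obtain ⟨j, hj1, hj2, hj3⟩ := descend hη0 (by linarith : (n:ℝ)*θ - m < (-w₁) - (-w₂))
      (by linarith : -w₂ ≤ (N₁:ℝ))
    have hjnn : (0:ℝ) ≤ (j:ℝ) := Nat.cast_nonneg j
    have hjlb : (N₁:ℝ) + w₁ ≤ (j:ℝ) * ((n:ℝ)*θ - m) := by linarith
    have hNw : (0:ℝ) ≤ (N₁:ℝ) + w₁ := by linarith
    have hjhalf : (j:ℝ) * ((n:ℝ)*θ - m) ≤ (j:ℝ) * (1/2) :=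
      mul_le_mul_of_nonneg_left hη12 hjnn
    have hjp : 2*((N₁:ℝ) + w₁) ≤ (j:ℝ) := by linarith
    have hjM : (M:ℝ) ≤ (j:ℝ) := by linarith
    obtain ⟨n', hn'⟩ : ∃ n' : ℕ, (n':ℝ) = -(n:ℝ) :=
      ⟨(-n).toNat, by exact_mod_cast congrArg (Int.cast : ℤ → ℝ) (Int.toNat_of_nonneg (by omega))⟩
    obtain ⟨m', hm'⟩ : ∃ m' : ℕ, (m':ℝ) = -(m:ℝ) :=
      ⟨(-m).toNat, by exact_mod_cast congrArg (Int.cast : ℤ → ℝ) (Int.toNat_of_nonneg (by omega))⟩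
    have hjm : (j:ℝ) ≤ (j:ℝ) * (m':ℝ) := by
      rw [hm']
      exact le_mul_of_one_le_right hjnn hm1'
    have hsub : N₁ ≤ j * m' := by
      have : (N₁:ℝ) ≤ ((j * m' : ℕ):ℝ) := by push_cast; linarith
      exact_mod_cast this
    refine ⟨j * n', j * m' - N₁, ?_, ?_, ?_, ?_⟩
    · have h10 : (M:ℝ) ≤ ((j*n' : ℕ):ℝ) := by
        push_cast
        rw [hn']
        have := le_mul_of_one_le_right hjnn hn1'
        linarith
      exact_mod_cast h10
    · have h11 : (M:ℝ) ≤ ((j * m' - N₁ : ℕ):ℝ) := by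
        rw [Nat.cast_sub hsub]
        push_cast
        linarith
      exact_mod_cast h11
    · have hval : ((j * m' - N₁ : ℕ):ℝ) - ((j*n' : ℕ):ℝ)*θ = (j:ℝ)*((n:ℝ)*θ - m) - N₁ := by
        rw [Nat.cast_sub hsub]
        push_cast
        rw [hn', hm']
        ring
      rw [hval]
      linarith
    · have hval : ((j * m' - N₁ : ℕ):ℝ) - ((j*n' : ℕ):ℝ)*θ = (j:ℝ)*((n:ℝ)*θ - m) - N₁ := by
        rw [Nat.cast_sub hsub]
        push_cast
        rw [hn', hm']
        ring
      rw [hval]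
      linarith
  · -- n > 0 : descending case
    have hn1 : (1:ℤ) ≤ n := hpos
    have hn1' : (1:ℝ) ≤ (n:ℝ) := by exact_mod_cast hn1
    have hm0 : (0:ℤ) ≤ m := by
      have hnθ : (0:ℝ) < (n:ℝ) * θ := mul_pos (by exact_mod_cast hpos) hθpos
      have h12 : (-1:ℝ) < (m:ℝ) := by linarith
      have : (-1:ℤ) < m := by exact_mod_cast h12
      omega
    have hm0' : (0:ℝ) ≤ (m:ℝ) := by exact_mod_cast hm0
    obtain ⟨N₀, hN₀ge⟩ : ∃ N : ℕ, |w₁| + |w₂| + (M:ℝ) + 1 ≤ (N:ℝ) :=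
      ⟨⌈|w₁| + |w₂| + (M:ℝ) + 1⌉₊, Nat.le_ceil _⟩
    obtain ⟨j, hj1, hj2, hj3⟩ := descend hη0 hηw (by linarith : w₁ ≤ (N₀:ℝ))
    have hjnn : (0:ℝ) ≤ (j:ℝ) := Nat.cast_nonneg j
    have hjlb : (M:ℝ) + 1 ≤ (j:ℝ) * ((n:ℝ)*θ - m) := by linarith
    have hje : (j:ℝ) * ((n:ℝ)*θ - m) ≤ (j:ℝ) :=
      mul_le_of_le_one_right hjnn (by linarith)
    have hjM : (M:ℝ) ≤ (j:ℝ) := by linarith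
    obtain ⟨n', hn'⟩ : ∃ n' : ℕ, (n':ℝ) = (n:ℝ) :=
      ⟨n.toNat, by exact_mod_cast congrArg (Int.cast : ℤ → ℝ) (Int.toNat_of_nonneg (by omega))⟩
    obtain ⟨m', hm'⟩ : ∃ m' : ℕ, (m':ℝ) = (m:ℝ) :=
      ⟨m.toNat, by exact_mod_cast congrArg (Int.cast : ℤ → ℝ) (Int.toNat_of_nonneg hm0)⟩
    refine ⟨j * n', j * m' + N₀, ?_, ?_, ?_, ?_⟩
    · have h13 : (M:ℝ) ≤ ((j*n' : ℕ):ℝ) := by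
        push_cast
        rw [hn']
        have := le_mul_of_one_le_right hjnn hn1'
        linarith
      exact_mod_cast h13
    · have h14 : (M:ℝ) ≤ ((j * m' + N₀ : ℕ):ℝ) := by
        push_cast
        rw [hm']
        have := mul_nonneg hjnn hm0'
        have hMN : (M:ℝ) ≤ (N₀:ℝ) := by linarith
        linarith
      exact_mod_cast h14
    · have hval : ((j * m' + N₀ : ℕ):ℝ) - ((j*n' : ℕ):ℝ)*θ = (N₀:ℝ) - (j:ℝ)*((n:ℝ)*θ - m) := by
        push_cast
        rw [hn', hm']
        ring
      rw [hval]
      linarith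
    · have hval : ((j * m' + N₀ : ℕ):ℝ) - ((j*n' : ℕ):ℝ)*θ = (N₀:ℝ) - (j:ℝ)*((n:ℝ)*θ - m) := by
        push_cast
        rw [hn', hm']
        ring
      rw [hval]
      linarith

end Chunk5

section Chunk6

lemma iter_contOn {φ : ℝ → ℝ} (hc : ContinuousOn φ (Set.Icc 0 1))
    (hmaps : Set.MapsTo φ (Set.Icc 0 1) (Set.Icc 0 1)) (k : ℕ) :
    ContinuousOn (φ^[k]) (Set.Icc 0 1) := by
  induction k with
  | zero => simpa using continuousOn_id
  | succ n ih =>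
    rw [Function.iterate_succ']
    exact hc.comp ih (hmaps.iterate n)

lemma slope_tendsto {h : ℝ → ℝ} (hh1 : ContDiffOn ℝ 1 h (Set.Icc 0 1)) (hh0 : h 0 = 0)
    {v : ℕ → ℝ} (hv : ∀ k, v k ∈ Set.Ioo (0:ℝ) 1) (hv0 : Filter.Tendsto v Filter.atTop (nhds 0)) :
    Filter.Tendsto (fun k => h (v k) / v k) Filter.atTop (nhds (derivWithin h (Set.Icc 0 1) 0)) := by
  have hd : HasDerivWithinAt h (derivWithin h (Set.Icc 0 1) 0) (Set.Icc 0 1) 0 :=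
    (hh1.differentiableOn one_ne_zero 0 ⟨le_rfl, zero_le_one⟩).hasDerivWithinAt
  rw [hasDerivWithinAt_iff_tendsto_slope] at hd
  have hcomp : Filter.Tendsto v Filter.atTop (nhdsWithin 0 (Set.Icc 0 1 \ {0})) := by
    rw [tendsto_nhdsWithin_iff]
    exact ⟨hv0, Filter.Eventually.of_forall fun k =>
      ⟨Set.Ioo_subset_Icc_self (hv k), (hv k).1.ne'⟩⟩
  have hco := hd.comp hcomp
  refine hco.congr fun k => ?_
  show slope h 0 (v k) = h (v k) / v k
  rw [slope_def_field, hh0, sub_zero, sub_zero]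

lemma vol_ge {s : Set ℝ} {u v : ℝ} (hsub : Set.Icc u v ⊆ s) (hs : s ⊆ Set.Icc 0 1) :
    v - u ≤ (MeasureTheory.volume s).toReal := by
  rcases le_or_gt v u with hvu | huv
  · have : (0:ℝ) ≤ (MeasureTheory.volume s).toReal := ENNReal.toReal_nonneg
    linarith
  · have h1 : ENNReal.ofReal (v - u) ≤ MeasureTheory.volume s := by
      rw [← Real.volume_Icc]
      exact MeasureTheory.measure_mono hsub
    have h2 : MeasureTheory.volume s ≠ ⊤ := by
      have hle : MeasureTheory.volume s ≤ MeasureTheory.volume (Set.Icc (0:ℝ) 1) :=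
        MeasureTheory.measure_mono hs
      rw [Real.volume_Icc] at hle
      exact ne_top_of_le_ne_top ENNReal.ofReal_ne_top hle
    have h3 := ENNReal.toReal_mono h2 h1
    rwa [ENNReal.toReal_ofReal (by linarith)] at h3

end Chunk6

def RatIndep (u v : ℝ) : Prop :=
  ∀ r s : ℚ, (r : ℝ) * u + (s : ℝ) * v = 0 → r = 0 ∧ s = 0

lemma div_chain {x y z : ℝ} (hy : y ≠ 0) (hz : z ≠ 0) : x/y*(y/z) = x/z := by
  field_simp

set_option maxHeartbeats 1000000 in
/-- Let `h : [0,1] → [0,1]` be an orientation-preserving C¹ diffeomorphism,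
and let `f` and `g` be C² NS-maps on `[0,1]` such that `ln α` and `ln β` are rationally
independent, where `α = f'(0)` and `β = g'(0)`. Let `I = [a,b]` and `J = [c,d]` be
nondegenerate closed intervals contained in `(0,1)`. Then there exist a constant `ρ > 0`
and infinitely many pairs of positive integers `(k_n, l_n)` such that for every `n`:
`|f^{k_n}(I) ∩ h^{-1}(g^{l_n}(J))| ≥ ρ · (f^{k_n}(b) − f^{k_n+1}(b))` and
`|h(f^{k_n}(I)) ∩ g^{l_n}(J)| ≥ ρ · (g^{l_n}(d) − g^{l_n+1}(d))`,
where `|·|` denotes Lebesgue measure. -/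
theorem intersection_iterates_proportion
    (h : ℝ → ℝ)
    (hh1 : ContDiffOn ℝ 1 h (Set.Icc 0 1))
    (hhbij : Set.BijOn h (Set.Icc 0 1) (Set.Icc 0 1))
    (hh0 : h 0 = 0) (hh1' : h 1 = 1)
    (hhpos : ∀ t ∈ Set.Icc (0 : ℝ) 1, 0 < derivWithin h (Set.Icc 0 1) t)
    (f g : ℝ → ℝ)
    (hf2 : ContDiffOn ℝ 2 f (Set.Icc 0 1)) (hfNS : IsNSMap f)
    (hg2 : ContDiffOn ℝ 2 g (Set.Icc 0 1)) (hgNS : IsNSMap g)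
    (α β : ℝ)
    (hα : derivWithin f (Set.Icc 0 1) 0 = α)
    (hβ : derivWithin g (Set.Icc 0 1) 0 = β)
    (hind : RatIndep (Real.log α) (Real.log β))
    (a b c d : ℝ) (hab : 0 < a ∧ a < b ∧ b < 1) (hcd : 0 < c ∧ c < d ∧ d < 1) :
    ∃ ρ : ℝ, 0 < ρ ∧
      ∃ k l : ℕ → ℕ,
        (∀ n : ℕ, 0 < k n ∧ 0 < l n) ∧
        Function.Injective (fun n => (k n, l n)) ∧
        (∀ n : ℕ,
          (volume ((f^[k n] '' Set.Icc a b) ∩ (h ⁻¹' (g^[l n] '' Set.Icc c d)))).toReal ≥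
            ρ * (f^[k n] b - f^[k n + 1] b) ∧
          (volume ((h '' (f^[k n] '' Set.Icc a b)) ∩ (g^[l n] '' Set.Icc c d))).toReal ≥
            ρ * (g^[l n] d - g^[l n + 1] d)) := by
  obtain ⟨ha0, hab', hb1⟩ := hab
  obtain ⟨hc0, hcd', hd1⟩ := hcd
  have ha : a ∈ Set.Ioo (0:ℝ) 1 := ⟨ha0, lt_trans hab' hb1⟩
  have hb : b ∈ Set.Ioo (0:ℝ) 1 := ⟨lt_trans ha0 hab', hb1⟩
  have hc : c ∈ Set.Ioo (0:ℝ) 1 := ⟨hc0, lt_trans hcd' hd1⟩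
  have hd : d ∈ Set.Ioo (0:ℝ) 1 := ⟨lt_trans hc0 hcd', hd1⟩
  -- f facts
  have hfmono := NSAux.mono hf2 hfNS
  have hfmaps : Set.MapsTo f (Set.Icc 0 1) (Set.Icc 0 1) := hfNS.1.mapsTo
  have hf0 : f 0 = 0 := hfNS.2.1
  have hflt : ∀ t ∈ Set.Ioo (0:ℝ) 1, f t < t := hfNS.2.2.2.2.2.2.2
  have hfdpos := NSAux.deriv_pos hf2 hfNS
  have hf1 : ContDiffOn ℝ 1 f (Set.Icc 0 1) := hf2.of_le one_le_two
  obtain ⟨Lf, hLf0, hLflip⟩ := NSAux.deriv_lip hf2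
  have hα0 : 0 < α := hα ▸ hfNS.2.2.2.2.1
  have hα1 : α < 1 := hα ▸ hfNS.2.2.2.2.2.1
  -- g facts
  have hgmono := NSAux.mono hg2 hgNS
  have hgmaps : Set.MapsTo g (Set.Icc 0 1) (Set.Icc 0 1) := hgNS.1.mapsTo
  have hg0 : g 0 = 0 := hgNS.2.1
  have hglt : ∀ t ∈ Set.Ioo (0:ℝ) 1, g t < t := hgNS.2.2.2.2.2.2.2
  have hgdpos := NSAux.deriv_pos hg2 hgNS
  have hg1 : ContDiffOn ℝ 1 g (Set.Icc 0 1) := hg2.of_le one_le_two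
  obtain ⟨Lg, hLg0, hLglip⟩ := NSAux.deriv_lip hg2
  have hβ0 : 0 < β := hβ ▸ hgNS.2.2.2.2.1
  have hβ1 : β < 1 := hβ ▸ hgNS.2.2.2.2.2.1
  -- Koenigs constants
  obtain ⟨cA, hcA0, hcAtd⟩ :=
    ns_koenigs hfmono hfmaps hf0 hflt hf1 hfdpos hLf0 hα0 hα1 hα hLflip ha
  obtain ⟨cB, hcB0, hcBtd⟩ :=
    ns_koenigs hfmono hfmaps hf0 hflt hf1 hfdpos hLf0 hα0 hα1 hα hLflip hb
  obtain ⟨cC, hcC0, hcCtd⟩ :=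
    ns_koenigs hgmono hgmaps hg0 hglt hg1 hgdpos hLg0 hβ0 hβ1 hβ hLglip hc
  obtain ⟨cD, hcD0, hcDtd⟩ :=
    ns_koenigs hgmono hgmaps hg0 hglt hg1 hgdpos hLg0 hβ0 hβ1 hβ hLglip hd
  -- separation
  have hcAB : cA < cB := by
    obtain ⟨εf, hεf0, hεf⟩ :=
      ns_sep hfmono hfmaps hf0 hflt hf1 hfdpos hLf0 hα0 hα1 hα hLflip ha hb hab'
    have hdiff := hcBtd.sub hcAtd
    have hle : εf ≤ cB - cA := by
      refine ge_of_tendsto hdiff ?_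
      filter_upwards [hεf] with k hk
      rw [← sub_div]
      exact hk
    linarith
  have hcCD : cC < cD := by
    obtain ⟨εg, hεg0, hεg⟩ :=
      ns_sep hgmono hgmaps hg0 hglt hg1 hgdpos hLg0 hβ0 hβ1 hβ hLglip hc hd hcd'
    have hdiff := hcDtd.sub hcCtd
    have hle : εg ≤ cD - cC := by
      refine ge_of_tendsto hdiff ?_
      filter_upwards [hεg] with l hl
      rw [← sub_div]
      exact hl
    linarith
  -- h facts
  have hhmono := NSAux.mono_aux hh1 hhpos
  set h'₀ : ℝ := derivWithin h (Set.Icc 0 1) 0 with hh'def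
  have hγ0 : 0 < h'₀ := hhpos 0 ⟨le_rfl, zero_le_one⟩
  obtain ⟨Λ₀, hΛ₀⟩ := isCompact_Icc.exists_bound_of_continuousOn
    (hh1.continuousOn_derivWithin NSAux.udiff le_rfl)
  set Λ : ℝ := max Λ₀ 1 with hΛdef
  have hΛ1 : (1:ℝ) ≤ Λ := le_max_right _ _
  have hΛpos : 0 < Λ := lt_of_lt_of_le one_pos hΛ1
  have hΛ : ∀ t ∈ Set.Icc (0:ℝ) 1, derivWithin h (Set.Icc 0 1) t ≤ Λ := fun t ht =>
    (le_abs_self _).trans ((hΛ₀ t ht).trans (le_max_left _ _))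
  -- limits of interval endpoints
  have haIoo : ∀ k, f^[k] a ∈ Set.Ioo (0:ℝ) 1 := fun k => ns_iter_Ioo hfmono hfmaps hf0 hflt a ha k
  have hbIoo : ∀ k, f^[k] b ∈ Set.Ioo (0:ℝ) 1 := fun k => ns_iter_Ioo hfmono hfmaps hf0 hflt b hb k
  have hcIoo : ∀ l, g^[l] c ∈ Set.Ioo (0:ℝ) 1 := fun l => ns_iter_Ioo hgmono hgmaps hg0 hglt c hc l
  have hdIoo : ∀ l, g^[l] d ∈ Set.Ioo (0:ℝ) 1 := fun l => ns_iter_Ioo hgmono hgmaps hg0 hglt d hd l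
  have hαk : ∀ k : ℕ, (0:ℝ) < α ^ k := fun k => pow_pos hα0 k
  have hβl : ∀ l : ℕ, (0:ℝ) < β ^ l := fun l => pow_pos hβ0 l
  have hA1td : Filter.Tendsto (fun k => h (f^[k] a) / α^k) Filter.atTop (nhds (h'₀ * cA)) := by
    have hsa := slope_tendsto hh1 hh0 haIoo
      (ns_iter_tendsto_zero hfmono hfmaps hf0 hflt hf1.continuousOn ha)
    refine (hsa.mul hcAtd).congr fun k => ?_
    exact div_chain (haIoo k).1.ne' (hαk k).ne'
  have hA2td : Filter.Tendsto (fun k => h (f^[k] b) / α^k) Filter.atTop (nhds (h'₀ * cB)) := by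
    have hsb := slope_tendsto hh1 hh0 hbIoo
      (ns_iter_tendsto_zero hfmono hfmaps hf0 hflt hf1.continuousOn hb)
    refine (hsb.mul hcBtd).congr fun k => ?_
    exact div_chain (hbIoo k).1.ne' (hαk k).ne'
  -- geometric window constants
  set γ₁ : ℝ := h'₀ * cA with hγ₁def
  set γ₂ : ℝ := h'₀ * cB with hγ₂def
  have hγlt : γ₁ < γ₂ := mul_lt_mul_of_pos_left hcAB hγ0
  have hγ₁pos : 0 < γ₁ := mul_pos hγ0 hcA0
  set t₁ : ℝ := (2*γ₁+γ₂)/(3*cC) with ht₁def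
  set t₂ : ℝ := (γ₁+2*γ₂)/(3*cC) with ht₂def
  have ht₁pos : 0 < t₁ := div_pos (by linarith) (by linarith)
  have ht₂pos : 0 < t₂ := div_pos (by linarith) (by linarith)
  have ht₁₂ : t₁ < t₂ := by
    rw [ht₁def, ht₂def]
    exact div_lt_div_of_pos_right (by linarith) (by linarith)
  have hcCt₁ : cC * t₁ = (2*γ₁+γ₂)/3 := by
    rw [ht₁def]
    field_simp
  have hcCt₂ : cC * t₂ = (γ₁+2*γ₂)/3 := by
    rw [ht₂def]
    field_simp
  have hγt₁ : γ₁ < cC * t₁ := by rw [hcCt₁]; linarith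
  have hγt₂ : cC * t₂ < γ₂ := by rw [hcCt₂]; linarith
  set ε : ℝ := min ((γ₂ - cC*t₂)/3) ((cD - cC)*t₁/3) with hεdef
  have hεpos : 0 < ε := lt_min (by linarith) (div_pos (mul_pos (by linarith) ht₁pos) (by norm_num))
  have hε1 : 3*ε ≤ γ₂ - cC*t₂ := by
    have := min_le_left ((γ₂ - cC*t₂)/3) ((cD - cC)*t₁/3)
    rw [← hεdef] at this
    linarith
  have hε2 : 3*ε ≤ (cD - cC)*t₁ := by
    have := min_le_right ((γ₂ - cC*t₂)/3) ((cD - cC)*t₁/3)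
    rw [← hεdef] at this
    linarith
  set e : ℝ := ε/(1+t₂) with hedef
  have hepos : 0 < e := div_pos hεpos (by linarith)
  have heε : e ≤ ε := by
    rw [hedef, div_le_iff₀ (by linarith : (0:ℝ) < 1 + t₂)]
    nlinarith
  have het₂ : e * t₂ ≤ ε := by
    rw [hedef, div_mul_eq_mul_div, div_le_iff₀ (by linarith : (0:ℝ) < 1 + t₂)]
    nlinarith
  -- eventual estimates in k
  have hevk : ∀ᶠ k in Filter.atTop,
      h (f^[k] a) ≤ (γ₁ + e)*α^k ∧ (γ₂ - e)*α^k ≤ h (f^[k] b) ∧ f^[k] b ≤ (cB+1)*α^k := by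
    have h1' := hA1td.eventually (eventually_le_nhds (by linarith : γ₁ < γ₁ + e))
    have h2' := hA2td.eventually (eventually_ge_nhds (by linarith : γ₂ - e < γ₂))
    have h3' := hcBtd.eventually (eventually_le_nhds (by linarith : cB < cB + 1))
    filter_upwards [h1', h2', h3'] with k hk1 hk2 hk3
    refine ⟨?_, ?_, ?_⟩
    · rw [div_le_iff₀ (hαk k)] at hk1; exact hk1
    · rw [le_div_iff₀ (hαk k)] at hk2; exact hk2
    · rw [div_le_iff₀ (hαk k)] at hk3; exact hk3
  have hevl : ∀ᶠ l in Filter.atTop,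
      g^[l] c ≤ (cC + e)*β^l ∧ (cD - e)*β^l ≤ g^[l] d ∧ g^[l] d ≤ (cD+1)*β^l := by
    have h1' := hcCtd.eventually (eventually_le_nhds (by linarith : cC < cC + e))
    have h2' := hcDtd.eventually (eventually_ge_nhds (by linarith : cD - e < cD))
    have h3' := hcDtd.eventually (eventually_le_nhds (by linarith : cD < cD + 1))
    filter_upwards [h1', h2', h3'] with l hl1 hl2 hl3
    refine ⟨?_, ?_, ?_⟩
    · rw [div_le_iff₀ (hβl l)] at hl1; exact hl1
    · rw [le_div_iff₀ (hβl l)] at hl2; exact hl2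
    · rw [div_le_iff₀ (hβl l)] at hl3; exact hl3
  obtain ⟨Nf, hNf⟩ := Filter.eventually_atTop.1 hevk
  obtain ⟨Ng, hNg⟩ := Filter.eventually_atTop.1 hevl
  set N : ℕ := max (max Nf Ng) 1 with hNdef
  have hN1 : 1 ≤ N := le_max_right _ _
  set ρ : ℝ := min (ε/(Λ*(cB+1))) (ε/(t₂*(cD+1))) with hρdef
  have hρpos : 0 < ρ := lt_min (by positivity) (by positivity)
  -- the logarithm window
  have hlogα : Real.log α < 0 := Real.log_neg hα0 hα1
  have hlogβ : Real.log β < 0 := Real.log_neg hβ0 hβ1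
  set θ : ℝ := Real.log α / Real.log β with hθdef
  have hθpos : 0 < θ := div_pos_of_neg_of_neg hlogα hlogβ
  have hθirr : Irrational θ := by
    rw [Irrational]
    rintro ⟨q, hq⟩
    have hqβ : (q:ℝ) * Real.log β = Real.log α := by
      rw [hq, hθdef, div_mul_cancel₀ _ hlogβ.ne]
    have := hind 1 (-q) (by push_cast; linarith)
    exact one_ne_zero this.1
  set w₁ : ℝ := Real.log t₂ / Real.log β with hw₁def
  set w₂ : ℝ := Real.log t₁ / Real.log β with hw₂def
  have hw : w₁ < w₂ := by
    rw [hw₁def, hw₂def, div_lt_div_right_of_neg hlogβ]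
    exact Real.log_lt_log ht₁pos ht₁₂
  -- conversion of window membership
  have hwindow : ∀ k l : ℕ, w₁ ≤ (l:ℝ) - (k:ℝ)*θ → (l:ℝ) - (k:ℝ)*θ ≤ w₂ →
      t₁ ≤ β^l/α^k ∧ β^l/α^k ≤ t₂ := by
    intro k l hw1 hw2
    have hTpos : 0 < β^l/α^k := div_pos (hβl l) (hαk k)
    have hlogT : Real.log (β^l/α^k) = (l:ℝ)*Real.log β - (k:ℝ)*Real.log α := by
      rw [Real.log_div (pow_ne_zero _ hβ0.ne') (pow_ne_zero _ hα0.ne'),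
        Real.log_pow, Real.log_pow]
      try push_cast
      try ring
    have hmul : ((l:ℝ) - (k:ℝ)*θ) * Real.log β = (l:ℝ)*Real.log β - (k:ℝ)*Real.log α := by
      have hcc : θ * Real.log β = Real.log α := by
        rw [hθdef, div_mul_cancel₀ _ hlogβ.ne]
      calc ((l:ℝ) - (k:ℝ)*θ) * Real.log β
          = (l:ℝ)*Real.log β - (k:ℝ)*(θ*Real.log β) := by ring
        _ = (l:ℝ)*Real.log β - (k:ℝ)*Real.log α := by rw [hcc]
    constructor
    · rw [← Real.log_le_log_iff ht₁pos hTpos, hlogT]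
      have := mul_le_mul_of_nonpos_right hw2 hlogβ.le
      rw [hmul] at this
      rw [hw₂def] at this
      rw [div_mul_cancel₀ _ hlogβ.ne] at this
      linarith
    · rw [← Real.log_le_log_iff hTpos ht₂pos, hlogT]
      have := mul_le_mul_of_nonpos_right hw1 hlogβ.le
      rw [hmul] at this
      rw [hw₁def] at this
      rw [div_mul_cancel₀ _ hlogβ.ne] at this
      linarith
  -- per-pair estimate
  have key : ∀ k l : ℕ, N ≤ k → N ≤ l → t₁ ≤ β^l/α^k → β^l/α^k ≤ t₂ →
      ((volume ((f^[k] '' Set.Icc a b) ∩ (h ⁻¹' (g^[l] '' Set.Icc c d)))).toReal ≥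
          ρ * (f^[k] b - f^[k + 1] b) ∧
        (volume ((h '' (f^[k] '' Set.Icc a b)) ∩ (g^[l] '' Set.Icc c d))).toReal ≥
          ρ * (g^[l] d - g^[l + 1] d)) := by
    intro k l hkN hlN hT1 hT2
    obtain ⟨E1, E2, E3⟩ := hNf k
      (le_trans (le_trans (le_max_left Nf Ng) (le_max_left (max Nf Ng) 1)) hkN)
    obtain ⟨E4, E5, E6⟩ := hNg l
      (le_trans (le_trans (le_max_right Nf Ng) (le_max_left (max Nf Ng) 1)) hlN)
    set T : ℝ := β^l/α^k with hTdef
    have hTα : β^l = T * α^k := by rw [hTdef]; field_simp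
    set ak := f^[k] a with hakdef
    set bk := f^[k] b with hbkdef
    set cl := g^[l] c with hcldef
    set dl := g^[l] d with hdldef
    have hakI := haIoo k
    have hbkI := hbIoo k
    have hclI := hcIoo l
    have hdlI := hdIoo l
    have hakbk : ak < bk := ns_iter_lt_pt hfmono hfmaps hf0 hflt ha hb hab' k
    set A1 := h ak with hA1def
    set A2 := h bk with hA2def
    set u := max A1 cl with hudef
    set v := min A2 dl with hvdef
    -- quantitative overlap
    have hu_le : u ≤ (cC*T + ε)*α^k := by
      apply max_le
      · calc A1 ≤ (γ₁ + e)*α^k := E1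
          _ ≤ (cC*T + ε)*α^k := by
              apply mul_le_mul_of_nonneg_right _ (hαk k).le
              have h9 : cC*t₁ ≤ cC*T := mul_le_mul_of_nonneg_left hT1 hcC0.le
              linarith [heε]
      · calc cl ≤ (cC + e)*β^l := E4
          _ = (cC*T + e*T)*α^k := by rw [hTα]; ring
          _ ≤ (cC*T + ε)*α^k := by
              apply mul_le_mul_of_nonneg_right _ (hαk k).le
              have heT : e*T ≤ e*t₂ := mul_le_mul_of_nonneg_left hT2 hepos.le
              linarith [het₂]
    have hv_ge : (cC*T + 2*ε)*α^k ≤ v := by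
      apply le_min
      · calc (cC*T + 2*ε)*α^k ≤ (γ₂ - e)*α^k := by
              apply mul_le_mul_of_nonneg_right _ (hαk k).le
              have h9 : cC*T ≤ cC*t₂ := mul_le_mul_of_nonneg_left hT2 hcC0.le
              linarith [heε, hε1]
          _ ≤ A2 := E2
      · calc (cC*T + 2*ε)*α^k ≤ (cD - e)*T*α^k := by
              apply mul_le_mul_of_nonneg_right _ (hαk k).le
              have h9 : (cD - cC)*t₁ ≤ (cD - cC)*T :=
                mul_le_mul_of_nonneg_left hT1 (by linarith)
              have h10 : e*T ≤ e*t₂ := mul_le_mul_of_nonneg_left hT2 hepos.le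
              linarith [hε2, het₂]
          _ = (cD - e)*β^l := by rw [hTα]; ring
          _ ≤ dl := E5
    have hvu : ε*α^k ≤ v - u := by
      have h9 : (cC*T + 2*ε)*α^k - (cC*T + ε)*α^k = ε*α^k := by ring
      linarith [hu_le, hv_ge]
    have huv : u < v := by
      have h9 : 0 < ε*α^k := mul_pos hεpos (hαk k)
      linarith
    -- inclusions
    have hIab : Set.Icc a b ⊆ Set.Icc (0:ℝ) 1 := Set.Icc_subset_Icc ha.1.le hb.2.le
    have hIcd : Set.Icc c d ⊆ Set.Icc (0:ℝ) 1 := Set.Icc_subset_Icc hc.1.le hd.2.le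
    have hIakbk : Set.Icc ak bk ⊆ Set.Icc (0:ℝ) 1 := Set.Icc_subset_Icc hakI.1.le hbkI.2.le
    have hIVT_f : Set.Icc ak bk ⊆ f^[k] '' Set.Icc a b :=
      intermediate_value_Icc hab'.le ((iter_contOn hf1.continuousOn hfmaps k).mono hIab)
    have hIVT_g : Set.Icc cl dl ⊆ g^[l] '' Set.Icc c d :=
      intermediate_value_Icc hcd'.le ((iter_contOn hg1.continuousOn hgmaps l).mono hIcd)
    have hIVT_h : Set.Icc A1 A2 ⊆ h '' (Set.Icc ak bk) :=
      intermediate_value_Icc hakbk.le (hh1.continuousOn.mono hIakbk)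
    have hfimg : f^[k] '' Set.Icc a b ⊆ Set.Icc (0:ℝ) 1 := by
      rintro _ ⟨x, hx, rfl⟩
      exact (hfmaps.iterate k) (hIab hx)
    have hgimg : g^[l] '' Set.Icc c d ⊆ Set.Icc (0:ℝ) 1 := by
      rintro _ ⟨x, hx, rfl⟩
      exact (hgmaps.iterate l) (hIcd hx)
    constructor
    · -- first statement
      have huA : u ∈ Set.Icc A1 A2 := ⟨le_max_left _ _, le_trans huv.le (min_le_left _ _)⟩
      have hvA : v ∈ Set.Icc A1 A2 := ⟨le_trans (le_max_left _ _) huv.le, min_le_left _ _⟩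
      obtain ⟨p, hpmem, hpu⟩ := hIVT_h huA
      obtain ⟨q, hqmem, hqv⟩ := hIVT_h hvA
      have hp01 : p ∈ Set.Icc (0:ℝ) 1 := hIakbk hpmem
      have hq01 : q ∈ Set.Icc (0:ℝ) 1 := hIakbk hqmem
      have hpq : p < q := by
        refine (hhmono.lt_iff_lt hp01 hq01).1 ?_
        rw [hpu, hqv]
        exact huv
      obtain ⟨ξ, hξ, hmvt⟩ := NSAux.mvt hh1 hp01.1 hpq hq01.2
      have hξI : ξ ∈ Set.Icc (0:ℝ) 1 := ⟨hp01.1.trans hξ.1.le, hξ.2.le.trans hq01.2⟩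
      have hqp : (v - u)/Λ ≤ q - p := by
        rw [div_le_iff₀ hΛpos]
        have heq : v - u = derivWithin h (Set.Icc 0 1) ξ * (q - p) := by
          rw [← hpu, ← hqv]
          exact hmvt
        rw [heq]
        calc derivWithin h (Set.Icc 0 1) ξ * (q - p) ≤ Λ * (q - p) :=
              mul_le_mul_of_nonneg_right (hΛ ξ hξI) (by linarith)
          _ = (q - p) * Λ := mul_comm _ _
      have hsub1 : Set.Icc p q ⊆ (f^[k] '' Set.Icc a b) ∩ (h ⁻¹' (g^[l] '' Set.Icc c d)) := by
        intro x hx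
        have hx_ak : x ∈ Set.Icc ak bk := ⟨hpmem.1.trans hx.1, hx.2.trans hqmem.2⟩
        have hx01 : x ∈ Set.Icc (0:ℝ) 1 := hIakbk hx_ak
        refine ⟨hIVT_f hx_ak, ?_⟩
        show h x ∈ g^[l] '' Set.Icc c d
        apply hIVT_g
        constructor
        · have h9 : h p ≤ h x := hhmono.monotoneOn hp01 hx01 hx.1
          have h10 : cl ≤ u := le_max_right _ _
          rw [hpu] at h9
          linarith
        · have h9 : h x ≤ h q := hhmono.monotoneOn hx01 hq01 hx.2
          have h10 : v ≤ dl := min_le_right _ _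
          rw [hqv] at h9
          linarith
      have hvol := vol_ge hsub1 (fun x hx => hfimg hx.1)
      have hRHS : bk - f^[k+1] b ≤ (cB+1)*α^k := by
        have h9 := (hbIoo (k+1)).1
        linarith [E3]
      have hρΛ : ρ*(cB+1) ≤ ε/Λ := by
        have h9 : ρ ≤ ε/(Λ*(cB+1)) := min_le_left _ _
        have h10 : (0:ℝ) < cB + 1 := by linarith
        calc ρ*(cB+1) ≤ (ε/(Λ*(cB+1)))*(cB+1) := mul_le_mul_of_nonneg_right h9 h10.le
          _ = ε/Λ := by
              field_simp
      have hchain : ρ * (bk - f^[k+1] b) ≤ q - p := by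
        calc ρ * (bk - f^[k+1] b) ≤ ρ * ((cB+1)*α^k) :=
              mul_le_mul_of_nonneg_left hRHS hρpos.le
          _ = ρ*(cB+1)*α^k := by ring
          _ ≤ (ε/Λ)*α^k := mul_le_mul_of_nonneg_right hρΛ (hαk k).le
          _ = (ε*α^k)/Λ := by ring
          _ ≤ (v-u)/Λ := by gcongr
          _ ≤ q - p := hqp
      exact le_trans hchain hvol
    · -- second statement
      have hsub2 : Set.Icc u v ⊆ (h '' (f^[k] '' Set.Icc a b)) ∩ (g^[l] '' Set.Icc c d) := by
        intro x hx
        constructor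
        · have hxA : x ∈ Set.Icc A1 A2 :=
            ⟨le_trans (le_max_left _ _) hx.1, le_trans hx.2 (min_le_left _ _)⟩
          obtain ⟨y, hy, hyx⟩ := hIVT_h hxA
          exact ⟨y, hIVT_f hy, hyx⟩
        · exact hIVT_g ⟨le_trans (le_max_right _ _) hx.1, le_trans hx.2 (min_le_right _ _)⟩
      have hvol := vol_ge hsub2 (fun x hx => hgimg hx.2)
      have hRHS : dl - g^[l+1] d ≤ (cD+1)*β^l := by
        have h9 := (hdIoo (l+1)).1
        linarith [E6]
      have hρt : ρ*(cD+1) ≤ ε/t₂ := by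
        have h9 : ρ ≤ ε/(t₂*(cD+1)) := min_le_right _ _
        have h10 : (0:ℝ) < cD + 1 := by linarith
        calc ρ*(cD+1) ≤ (ε/(t₂*(cD+1)))*(cD+1) := mul_le_mul_of_nonneg_right h9 h10.le
          _ = ε/t₂ := by
              field_simp
      have hβα : (ε/t₂)*β^l ≤ ε*α^k := by
        rw [hTα]
        have h9 : T/t₂ ≤ 1 := (div_le_one ht₂pos).2 hT2
        calc (ε/t₂)*(T*α^k) = (T/t₂)*(ε*α^k) := by ring
          _ ≤ 1*(ε*α^k) := mul_le_mul_of_nonneg_right h9 (by positivity)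
          _ = ε*α^k := one_mul _
      have hchain : ρ * (dl - g^[l+1] d) ≤ v - u := by
        calc ρ * (dl - g^[l+1] d) ≤ ρ * ((cD+1)*β^l) :=
              mul_le_mul_of_nonneg_left hRHS hρpos.le
          _ = ρ*(cD+1)*β^l := by ring
          _ ≤ (ε/t₂)*β^l := mul_le_mul_of_nonneg_right hρt (hβl l).le
          _ ≤ ε*α^k := hβα
          _ ≤ v - u := hvu
      exact le_trans hchain hvol
  -- construct the sequence of pairs
  have hex : ∀ M : ℕ, ∃ p : ℕ × ℕ, M ≤ p.1 ∧ N ≤ p.1 ∧ N ≤ p.2 ∧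
      t₁ ≤ β^p.2/α^p.1 ∧ β^p.2/α^p.1 ≤ t₂ := by
    intro M
    obtain ⟨k, l, hk, hl, h1', h2'⟩ := rot_hit hθpos hθirr hw (max M N)
    obtain ⟨hwin1, hwin2⟩ := hwindow k l h1' h2'
    exact ⟨(k, l), le_trans (le_max_left _ _) hk, le_trans (le_max_right _ _) hk,
      le_trans (le_max_right _ _) hl, hwin1, hwin2⟩
  choose P hP1 hP2 hP3 hP4 hP5 using hex
  set Q : ℕ → ℕ × ℕ := fun n => Nat.rec (P 0) (fun _ q => P (q.1 + 1)) n with hQdef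
  have hQs : ∀ n, Q (n+1) = P ((Q n).1 + 1) := fun n => rfl
  have hkmono : StrictMono (fun n => (Q n).1) := by
    apply strictMono_nat_of_lt_succ
    intro n
    have h9 := hP1 ((Q n).1 + 1)
    have h10 : Q (n+1) = P ((Q n).1 + 1) := hQs n
    rw [h10]
    omega
  have hkN : ∀ n, N ≤ (Q n).1 := by
    intro n
    cases n with
    | zero => exact hP2 0
    | succ m => rw [hQs m]; exact hP2 _
  have hlN : ∀ n, N ≤ (Q n).2 := by
    intro n
    cases n with
    | zero => exact hP3 0
    | succ m => rw [hQs m]; exact hP3 _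
  have hwinQ : ∀ n, t₁ ≤ β^(Q n).2/α^(Q n).1 ∧ β^(Q n).2/α^(Q n).1 ≤ t₂ := by
    intro n
    cases n with
    | zero => exact ⟨hP4 0, hP5 0⟩
    | succ m => rw [hQs m]; exact ⟨hP4 _, hP5 _⟩
  refine ⟨ρ, hρpos, fun n => (Q n).1, fun n => (Q n).2, ?_, ?_, ?_⟩
  · intro n
    exact ⟨lt_of_lt_of_le Nat.zero_lt_one (le_trans hN1 (hkN n)),
      lt_of_lt_of_le Nat.zero_lt_one (le_trans hN1 (hlN n))⟩
  · intro m n hmn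
    have h9 : (Q m).1 = (Q n).1 := congrArg Prod.fst hmn
    exact hkmono.injective h9
  · intro n
    exact key _ _ (hkN n) (hlN n) (hwinQ n).1 (hwinQ n).2
end

section
/- Let h : [0,1] → [0,1] be an orientation-preserving C¹ diffeomorphism, let f and g be C² NS-maps on [0,1] with α = f'(0), β = g'(0) and ln α, ln β rationally independent, and let δ > 0 be small enough that f and g each admit a C¹ Sternberg linearization on [0, δ]. Then for every x ∈ (0, δ] and every nondegenerate closed interval I = [a,b] ⊆ (0, δ], there exist infinitely many pairs of positive integers (k_n, l_n) such that g^{l_n}(x) ∈ h(f^{k_n}(I)), and moreover k_n / l_n → ln β / ln α as n → ∞. -/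
open Set Filter

/-- A C¹ Sternberg linearization of a map `φ` (with multiplier `μ = φ'(0)`) on `[0, δ]`:
a C¹ diffeomorphism `h₀` from `[0, δ]` onto its image with `h₀(0) = 0`, `h₀'(0) = 1`,
and `h₀(φ(t)) = μ · h₀(t)` for all `t ∈ [0, δ]`. -/
def IsSternbergLinearization (φ h₀ : ℝ → ℝ) (μ δ : ℝ) : Prop :=
  ContDiffOn ℝ 1 h₀ (Set.Icc 0 δ) ∧
  Set.InjOn h₀ (Set.Icc 0 δ) ∧
  (∀ t ∈ Set.Icc (0 : ℝ) δ, derivWithin h₀ (Set.Icc 0 δ) t ≠ 0) ∧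
  h₀ 0 = 0 ∧
  derivWithin h₀ (Set.Icc 0 δ) 0 = 1 ∧
  ∀ t ∈ Set.Icc (0 : ℝ) δ, h₀ (φ t) = μ * h₀ t

-- === Auxiliary lemmas ===

section Aux
open Set Filter

lemma aux_step_lemma (σ E₁ E₂ : ℝ) (hσ : 0 < σ) (hσE : σ < E₂ - E₁) (N : ℕ) :
    ∃ n : ℕ, N < n ∧ ∃ j : ℤ, (n : ℝ) * σ - j ∈ Set.Icc E₁ E₂ := by
  set j : ℤ := ⌈((N : ℝ) + 1) * σ - E₁⌉ with hj
  set P : ℝ := E₁ + j with hPdef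
  have hP : ((N : ℝ) + 1) * σ ≤ P := by
    have := Int.le_ceil (((N : ℝ) + 1) * σ - E₁)
    rw [hPdef]; linarith
  have hP0 : 0 < P := lt_of_lt_of_le (by positivity) hP
  set n0 : ℤ := ⌊P / σ⌋ + 1 with hn0
  have hfl : (⌊P / σ⌋ : ℝ) ≤ P / σ := Int.floor_le _
  have hfl2 : P / σ < (⌊P / σ⌋ : ℝ) + 1 := Int.lt_floor_add_one _
  have key1 : P < (n0 : ℝ) * σ := by
    rw [hn0]; push_cast
    calc P = P / σ * σ := by field_simp
    _ < ((⌊P / σ⌋ : ℝ) + 1) * σ := by exact mul_lt_mul_of_pos_right hfl2 hσ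
  have key2 : ((n0 : ℝ) - 1) * σ ≤ P := by
    rw [hn0]; push_cast
    calc ((⌊P / σ⌋ : ℝ) + 1 - 1) * σ ≤ P / σ * σ := by
          apply mul_le_mul_of_nonneg_right _ hσ.le; linarith
    _ = P := by field_simp
  have hn0pos : 0 < n0 := by
    by_contra hc
    push_neg at hc
    have : (n0 : ℝ) * σ ≤ 0 := mul_nonpos_of_nonpos_of_nonneg (by exact_mod_cast hc) hσ.le
    linarith
  refine ⟨n0.toNat, ?_, j, ?_, ?_⟩
  · have hcast : ((n0.toNat : ℕ) : ℝ) = (n0 : ℝ) := by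
      exact_mod_cast Int.toNat_of_nonneg hn0pos.le
    have : ((N : ℝ) + 1) * σ < (n0 : ℝ) * σ := lt_of_le_of_lt hP key1
    have hNn : ((N : ℝ) + 1) < (n0 : ℝ) := lt_of_mul_lt_mul_right this hσ.le
    have : (N : ℝ) < (n0.toNat : ℝ) := by rw [hcast]; linarith
    exact_mod_cast this
  · have hcast : ((n0.toNat : ℕ) : ℝ) = (n0 : ℝ) := by
      exact_mod_cast Int.toNat_of_nonneg hn0pos.le
    rw [hcast]
    have : E₁ + (j : ℝ) < (n0 : ℝ) * σ := key1
    linarith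
  · have hcast : ((n0.toNat : ℕ) : ℝ) = (n0 : ℝ) := by
      exact_mod_cast Int.toNat_of_nonneg hn0pos.le
    rw [hcast]
    have : (n0 : ℝ) * σ ≤ P + σ := by linarith [key2]
    have : (n0 : ℝ) * σ ≤ E₁ + j + σ := by rw [hPdef] at this; linarith
    linarith

lemma aux_nt_lemma (p q D₁ D₂ : ℝ) (hp : 0 < p) (hq : 0 < q) (hirr : Irrational (p / q))
    (hD : D₁ < D₂) (N : ℕ) :
    ∃ k l : ℕ, N < k ∧ N < l ∧ (k : ℝ) * p - (l : ℝ) * q ∈ Set.Icc D₁ D₂ := by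
  set θ : ℝ := p / q with hθ
  have hθpos : 0 < θ := div_pos hp hq
  set E₁ : ℝ := D₁ / q with hE₁
  set E₂ : ℝ := D₂ / q with hE₂
  have hρ : 0 < E₂ - E₁ := by
    rw [hE₁, hE₂, div_sub_div_same]; exact div_pos (by linarith) hq
  set nn : ℕ := ⌈1 / (E₂ - E₁)⌉₊ + 1 with hnn
  have hnnpos : 0 < nn := Nat.succ_pos _
  obtain ⟨J, m', hm'pos, hm'le, habs⟩ := Real.exists_int_int_abs_mul_sub_le θ hnnpos
  set e : ℝ := (m' : ℝ) * θ - J with he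
  have habs' : |e| < E₂ - E₁ := by
    refine lt_of_le_of_lt habs ?_
    rw [div_lt_iff₀ (by positivity)]
    rw [← div_lt_iff₀' hρ]
    have : (1 : ℝ) / (E₂ - E₁) ≤ (⌈1 / (E₂ - E₁)⌉₊ : ℝ) := Nat.le_ceil _
    have h2 : ((⌈1 / (E₂ - E₁)⌉₊ : ℕ) : ℝ) < (nn : ℝ) + 1 := by
      rw [hnn]; push_cast; linarith
    linarith
  have hene : e ≠ 0 := by
    intro h0
    apply hirr
    have hm'0 : (m' : ℝ) ≠ 0 := by exact_mod_cast hm'pos.ne'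
    refine ⟨(J : ℚ) / (m' : ℚ), ?_⟩
    have hmθ : (m' : ℝ) * θ = J := by rw [he] at h0; linarith
    push_cast
    rw [div_eq_iff hm'0]
    linarith
  set m : ℕ := m'.toNat with hm
  have hm1 : 1 ≤ m := by rw [hm]; omega
  have hmcast : ((m : ℕ) : ℝ) = (m' : ℝ) := by exact_mod_cast Int.toNat_of_nonneg hm'pos.le
  set N' : ℕ := max N (⌈(D₂ + ((N : ℝ) + 1) * q) / p⌉₊) with hN'
  have main : ∃ n : ℕ, N' < n ∧ ∃ i : ℤ, ((n * m : ℕ) : ℝ) * θ - i ∈ Set.Icc E₁ E₂ := by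
    rcases lt_or_gt_of_ne hene with hneg | hpos
    · have h1 : 0 < -e := by linarith
      have h2 : -e < (-E₁) - (-E₂) := by
        have := abs_lt.mp habs'; rcases this with ⟨hl, hr⟩; linarith
      obtain ⟨n, hn, j, hj⟩ := aux_step_lemma (-e) (-E₂) (-E₁) h1 h2 N'
      refine ⟨n, hn, n * J - j, ?_⟩
      have hcast : ((n * m : ℕ) : ℝ) = (n : ℝ) * (m' : ℝ) := by push_cast [hmcast]; ring
      have hexp : ((n * m : ℕ) : ℝ) * θ - ((n * J - j : ℤ) : ℝ) = -((n : ℝ) * (-e) - j) := by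
        rw [hcast]; push_cast; rw [he]; ring
      rw [hexp]
      rcases hj with ⟨hj1, hj2⟩
      constructor <;> linarith
    · have h2 : e < E₂ - E₁ := by have := abs_lt.mp habs'; exact this.2
      obtain ⟨n, hn, j, hj⟩ := aux_step_lemma e E₁ E₂ hpos h2 N'
      refine ⟨n, hn, j + n * J, ?_⟩
      have hcast : ((n * m : ℕ) : ℝ) = (n : ℝ) * (m' : ℝ) := by push_cast [hmcast]; ring
      have hexp : ((n * m : ℕ) : ℝ) * θ - ((j + n * J : ℤ) : ℝ) = (n : ℝ) * e - j := by
        rw [hcast]; push_cast; rw [he]; ring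
      rw [hexp]; exact hj
  obtain ⟨n, hn, i, hi1, hi2⟩ := main
  set k : ℕ := n * m with hk
  have hkn : n ≤ k := by rw [hk]; exact Nat.le_mul_of_pos_right n hm1
  have hkN : N < k := by
    have : N ≤ N' := le_max_left _ _
    omega
  have hqθ : q * θ = p := by rw [hθ]; field_simp
  have hcond1 : D₁ ≤ (k : ℝ) * p - (i : ℝ) * q := by
    have := mul_le_mul_of_nonneg_left hi1 hq.le
    rw [hE₁] at this
    have h3 : q * (D₁ / q) = D₁ := by field_simp
    nlinarith [hqθ]
  have hcond2 : (k : ℝ) * p - (i : ℝ) * q ≤ D₂ := by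
    have := mul_le_mul_of_nonneg_left hi2 hq.le
    rw [hE₂] at this
    have h3 : q * (D₂ / q) = D₂ := by field_simp
    nlinarith [hqθ]
  have hNi : ((N : ℝ) + 1) * q < (i : ℝ) * q := by
    have hN'ge : ((N' : ℕ) : ℝ) ≥ (D₂ + ((N : ℝ) + 1) * q) / p := by
      have h1 : ((⌈(D₂ + ((N : ℝ) + 1) * q) / p⌉₊ : ℕ) : ℝ) ≥ (D₂ + ((N : ℝ) + 1) * q) / p :=
        Nat.le_ceil _
      have h2 : (N' : ℝ) ≥ (⌈(D₂ + ((N : ℝ) + 1) * q) / p⌉₊ : ℕ) := by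
        rw [hN']; exact_mod_cast le_max_right _ _
      linarith
    have hkbig : (k : ℝ) * p > (D₂ + ((N : ℝ) + 1) * q) := by
      have h4 : (k : ℝ) ≥ (n : ℝ) := by exact_mod_cast hkn
      have h5 : (n : ℝ) > (N' : ℝ) := by exact_mod_cast hn
      have : (k : ℝ) > (D₂ + ((N : ℝ) + 1) * q) / p := by linarith
      calc (k : ℝ) * p > ((D₂ + ((N : ℝ) + 1) * q) / p) * p :=
            mul_lt_mul_of_pos_right this hp
        _ = D₂ + ((N : ℝ) + 1) * q := by field_simp
    linarith
  have hipos : 0 < i := by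
    by_contra hc
    push_neg at hc
    have h1 : (i : ℝ) * q ≤ 0 := mul_nonpos_of_nonpos_of_nonneg (by exact_mod_cast hc) hq.le
    have h2 : ((N : ℝ) + 1) * q > 0 := by positivity
    linarith
  have hic : ((i.toNat : ℕ) : ℝ) = (i : ℝ) := by exact_mod_cast Int.toNat_of_nonneg hipos.le
  refine ⟨k, i.toNat, hkN, ?_, ?_, ?_⟩
  · have h1 : (N : ℝ) + 1 ≤ (i : ℝ) := by
      have := lt_of_mul_lt_mul_right hNi hq.le
      linarith
    have : (N : ℝ) < (i.toNat : ℝ) := by rw [hic]; linarith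
    exact_mod_cast this
  · rw [hic]; exact hcond1
  · rw [hic]; exact hcond2

end Aux

section Aux2
open Set Filter

lemma aux_ns_le {φ : ℝ → ℝ} (hφ : IsNSMap φ) : ∀ t ∈ Set.Icc (0:ℝ) 1, φ t ≤ t := by
  obtain ⟨hbij, h0, h1, -, -, -, -, hlt⟩ := hφ
  intro t ht
  rcases eq_or_lt_of_le ht.1 with h | h
  · rw [← h, h0]
  rcases eq_or_lt_of_le ht.2 with h' | h'
  · rw [h', h1]
  · exact (hlt t ⟨h, h'⟩).le

lemma aux_ns_mem {φ : ℝ → ℝ} (hφ : IsNSMap φ) {δ : ℝ} (hδ1 : δ ≤ 1) :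
    Set.MapsTo φ (Set.Icc 0 δ) (Set.Icc 0 δ) := by
  intro t ht
  have ht1 : t ∈ Set.Icc (0:ℝ) 1 := ⟨ht.1, le_trans ht.2 hδ1⟩
  exact ⟨(hφ.1.mapsTo ht1).1, le_trans (aux_ns_le hφ t ht1) ht.2⟩

lemma aux_ns_mem_pos {φ : ℝ → ℝ} (hφ : IsNSMap φ) {δ : ℝ} (hδ1 : δ ≤ 1) :
    Set.MapsTo φ (Set.Ioc 0 δ) (Set.Ioc 0 δ) := by
  intro t ht
  have ht1 : t ∈ Set.Icc (0:ℝ) 1 := ⟨ht.1.le, le_trans ht.2 hδ1⟩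
  have h2 := aux_ns_mem hφ hδ1 (Set.mem_of_mem_of_subset ht Set.Ioc_subset_Icc_self)
  refine ⟨lt_of_le_of_ne h2.1 ?_, h2.2⟩
  intro h0
  have : t = 0 := by
    apply hφ.1.injOn ht1 (by constructor <;> norm_num)
    rw [← h0, hφ.2.1]
  exact absurd this ht.1.ne'

lemma aux_ns_iter_mem {φ : ℝ → ℝ} (hφ : IsNSMap φ) {δ : ℝ} (hδ1 : δ ≤ 1) {t : ℝ}
    (ht : t ∈ Set.Ioc 0 δ) (k : ℕ) : φ^[k] t ∈ Set.Ioc 0 δ := by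
  induction k with
  | zero => simpa using ht
  | succ k ih => rw [Function.iterate_succ_apply']; exact aux_ns_mem_pos hφ hδ1 ih

lemma aux_ns_tendsto {φ : ℝ → ℝ} (hφ : IsNSMap φ) (hcont : ContinuousOn φ (Set.Icc 0 1))
    {δ : ℝ} (hδ1 : δ ≤ 1) {t₀ : ℝ} (ht₀ : t₀ ∈ Set.Ioc 0 δ) (ht₀1 : t₀ < 1) :
    Filter.Tendsto (fun k => φ^[k] t₀) Filter.atTop (nhds 0) := by
  set t : ℕ → ℝ := fun k => φ^[k] t₀ with hts
  have hmem : ∀ k, t k ∈ Set.Ioc 0 δ := fun k => aux_ns_iter_mem hφ hδ1 ht₀ k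
  have hmem1 : ∀ k, t k ∈ Set.Icc (0:ℝ) 1 := fun k =>
    ⟨(hmem k).1.le, le_trans (hmem k).2 hδ1⟩
  have hanti : Antitone t := by
    apply antitone_nat_of_succ_le
    intro k
    have : t (k + 1) = φ (t k) := Function.iterate_succ_apply' φ k t₀
    rw [this]
    exact aux_ns_le hφ _ (hmem1 k)
  have hbdd : BddBelow (Set.range t) := ⟨0, by rintro y ⟨k, rfl⟩; exact (hmem k).1.le⟩
  have hlim := tendsto_atTop_ciInf hanti hbdd
  set L : ℝ := ⨅ k, t k with hL
  have hL0 : 0 ≤ L := le_ciInf fun k => (hmem k).1.le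
  have hLt0 : L ≤ t 0 := ciInf_le hbdd 0
  have ht00 : t 0 = t₀ := rfl
  have hL1 : L < 1 := lt_of_le_of_lt (by rw [← ht00] at ht₀1 ⊢; exact hLt0) ht₀1
  rcases eq_or_lt_of_le hL0 with h | h
  · rwa [← h] at hlim
  · exfalso
    have hLmem : L ∈ Set.Icc (0:ℝ) 1 := ⟨hL0, hL1.le⟩
    have h1 : Filter.Tendsto (fun k => t (k + 1)) Filter.atTop (nhds L) :=
      hlim.comp (Filter.tendsto_add_atTop_nat 1)
    have h2 : Filter.Tendsto (fun k => φ (t k)) Filter.atTop (nhds (φ L)) := by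
      apply (hcont.continuousWithinAt hLmem).tendsto.comp
      apply tendsto_nhdsWithin_of_tendsto_nhds_of_eventually_within _ hlim
      exact Filter.Eventually.of_forall hmem1
    have heq : (fun k => t (k + 1)) = fun k => φ (t k) := by
      funext k; exact Function.iterate_succ_apply' φ k t₀
    rw [heq] at h1
    have he1 : φ L = L := tendsto_nhds_unique h2 h1
    have he2 : φ L < L := hφ.2.2.2.2.2.2.2 L ⟨h, hL1⟩
    linarith

lemma aux_slope_bound {ψ : ℝ → ℝ} {c δ' : ℝ} (hδ' : 0 < δ')
    (hd : HasDerivWithinAt ψ c (Set.Icc 0 δ') 0) (hψ0 : ψ 0 = 0) {ε : ℝ} (hε : 0 < ε) :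
    ∃ η, 0 < η ∧ η ≤ δ' ∧ ∀ t, 0 < t → t ≤ η → |ψ t - c * t| ≤ ε * t := by
  have h1 : Filter.Tendsto (slope ψ 0) (nhdsWithin 0 (Set.Icc 0 δ' \ {0})) (nhds c) :=
    hasDerivWithinAt_iff_tendsto_slope.mp hd
  have h2 : ∀ᶠ u in nhdsWithin 0 (Set.Icc 0 δ' \ {0}), dist (slope ψ 0 u) c < ε :=
    Metric.tendsto_nhds.mp h1 ε hε
  rw [Filter.Eventually, Metric.mem_nhdsWithin_iff] at h2
  obtain ⟨η, hη, hball⟩ := h2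
  refine ⟨min (η / 2) δ', by positivity, min_le_right _ _, ?_⟩
  intro u hu0 huη
  have huδ : u ≤ δ' := le_trans huη (min_le_right _ _)
  have huη2 : u < η := by
    have := le_trans huη (min_le_left _ _); linarith
  have hmem : u ∈ Metric.ball (0:ℝ) η ∩ (Set.Icc 0 δ' \ {0}) := by
    refine ⟨?_, ⟨hu0.le, huδ⟩, by simp [hu0.ne']⟩
    rw [Metric.mem_ball, Real.dist_eq, sub_zero, abs_of_pos hu0]; exact huη2
  have := hball hmem
  rw [Set.mem_setOf_eq, Real.dist_eq] at this
  have hslope : slope ψ 0 u = ψ u / u := by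
    rw [slope_def_field, hψ0, sub_zero, sub_zero]
  rw [hslope] at this
  have hle : |ψ u / u - c| ≤ ε := this.le
  calc |ψ u - c * u| = |(ψ u / u - c) * u| := by
        congr 1
        field_simp
    _ = |ψ u / u - c| * u := by rw [abs_mul, abs_of_pos hu0]
    _ ≤ ε * u := mul_le_mul_of_nonneg_right hle hu0.le

lemma aux_smon {ψ : ℝ → ℝ} {δ' : ℝ} (hδ' : 0 < δ') (hc : ContDiffOn ℝ 1 ψ (Set.Icc 0 δ'))
    (hne : ∀ t ∈ Set.Icc (0:ℝ) δ', derivWithin ψ (Set.Icc 0 δ') t ≠ 0)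
    (h0 : derivWithin ψ (Set.Icc 0 δ') 0 = 1) : StrictMonoOn ψ (Set.Icc 0 δ') := by
  have ud : UniqueDiffOn ℝ (Set.Icc (0:ℝ) δ') := uniqueDiffOn_Icc hδ'
  have dcont : ContinuousOn (derivWithin ψ (Set.Icc 0 δ')) (Set.Icc 0 δ') :=
    hc.continuousOn_derivWithin ud le_rfl
  have hpos : ∀ t ∈ Set.Icc (0:ℝ) δ', 0 < derivWithin ψ (Set.Icc 0 δ') t := by
    intro t ht
    by_contra hcon
    push_neg at hcon
    have hneg : derivWithin ψ (Set.Icc 0 δ') t < 0 := lt_of_le_of_ne hcon (hne t ht)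
    have ht0 : t ≠ 0 := by intro h; rw [h, h0] at hneg; linarith
    have htpos : 0 < t := lt_of_le_of_ne ht.1 (Ne.symm ht0)
    have hsub : Set.Icc (0:ℝ) t ⊆ Set.Icc 0 δ' := Set.Icc_subset_Icc le_rfl ht.2
    have h0mem : (0:ℝ) ∈ Set.Icc (derivWithin ψ (Set.Icc 0 δ') t)
        (derivWithin ψ (Set.Icc 0 δ') 0) := by
      rw [h0]; exact ⟨hneg.le, zero_le_one⟩
    obtain ⟨s, hs, hs0⟩ := intermediate_value_Icc' htpos.le (dcont.mono hsub) h0mem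
    exact hne s (hsub hs) hs0
  apply strictMonoOn_of_hasDerivWithinAt_pos (convex_Icc _ _) (hc.continuousOn)
    (f' := derivWithin ψ (Set.Icc 0 δ'))
  · intro u hu
    rw [interior_Icc] at hu
    have hu' : u ∈ Set.Icc (0:ℝ) δ' := Set.Ioo_subset_Icc_self hu
    have := (hc.differentiableOn one_ne_zero u hu').hasDerivWithinAt
    rw [interior_Icc]
    exact this.mono Set.Ioo_subset_Icc_self
  · intro u hu
    rw [interior_Icc] at hu
    exact hpos u (Set.Ioo_subset_Icc_self hu)

lemma aux_stern_iter {φ hh : ℝ → ℝ} {μ δ : ℝ}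
    (hmap : Set.MapsTo φ (Set.Icc 0 δ) (Set.Icc 0 δ))
    (heq : ∀ t ∈ Set.Icc (0:ℝ) δ, hh (φ t) = μ * hh t)
    {t : ℝ} (ht : t ∈ Set.Icc 0 δ) (k : ℕ) : hh (φ^[k] t) = μ ^ k * hh t := by
  induction k with
  | zero => simp
  | succ k ih =>
    have hmem : φ^[k] t ∈ Set.Icc 0 δ := by
      clear ih
      induction k with
      | zero => simpa using ht
      | succ k ih2 => rw [Function.iterate_succ_apply']; exact hmap ih2
    rw [Function.iterate_succ_apply', heq _ hmem, ih, pow_succ]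
    ring

lemma aux_iter_contOn {φ : ℝ → ℝ} {δ : ℝ} (hδ1 : δ ≤ 1)
    (hcont : ContinuousOn φ (Set.Icc 0 1))
    (hmap : Set.MapsTo φ (Set.Icc 0 δ) (Set.Icc 0 δ)) (k : ℕ) :
    ContinuousOn (φ^[k]) (Set.Icc 0 δ) := by
  induction k with
  | zero => simpa using continuousOn_id
  | succ k ih =>
    rw [Function.iterate_succ']
    have hmapk : Set.MapsTo (φ^[k]) (Set.Icc 0 δ) (Set.Icc 0 δ) := hmap.iterate k
    apply ContinuousOn.comp hcont ih
    exact hmapk.mono_right (Set.Icc_subset_Icc le_rfl hδ1)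

end Aux2

set_option maxHeartbeats 1000000 in
/-- Lemma 2.4 of the paper: Let `h : [0,1] → [0,1]` be an
orientation-preserving C¹ diffeomorphism, let `f` and `g` be C² NS-maps on `[0,1]` with
`α = f'(0)`, `β = g'(0)` and `ln α, ln β` rationally independent, and let `δ > 0` be
small enough that `f` and `g` each admit a C¹ Sternberg linearization on `[0, δ]`.
Then for every `x ∈ (0, δ]` and every nondegenerate closed interval
`I = [a,b] ⊆ (0, δ]`, there exist infinitely many pairs of positive integers
`(k_n, l_n)` such that `g^{l_n}(x) ∈ h(f^{k_n}(I))`, and moreover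
`k_n / l_n → ln β / ln α` as `n → ∞`. -/
theorem lemma_infinitely_many_intersections
    (h : ℝ → ℝ)
    (hh1 : ContDiffOn ℝ 1 h (Set.Icc 0 1))
    (hhbij : Set.BijOn h (Set.Icc 0 1) (Set.Icc 0 1))
    (hh0 : h 0 = 0) (hh1' : h 1 = 1)
    (hhpos : ∀ t ∈ Set.Icc (0 : ℝ) 1, 0 < derivWithin h (Set.Icc 0 1) t)
    (f g : ℝ → ℝ)
    (hf2 : ContDiffOn ℝ 2 f (Set.Icc 0 1)) (hfNS : IsNSMap f)
    (hg2 : ContDiffOn ℝ 2 g (Set.Icc 0 1)) (hgNS : IsNSMap g)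
    (α β : ℝ)
    (hα : derivWithin f (Set.Icc 0 1) 0 = α)
    (hβ : derivWithin g (Set.Icc 0 1) 0 = β)
    (hind : RatIndep (Real.log α) (Real.log β))
    (δ : ℝ) (hδ : 0 < δ) (hδ1 : δ ≤ 1)
    (hlinf : ∃ h₁ : ℝ → ℝ, IsSternbergLinearization f h₁ α δ)
    (hling : ∃ h₂ : ℝ → ℝ, IsSternbergLinearization g h₂ β δ)
    (x : ℝ) (hx : x ∈ Set.Ioc 0 δ)
    (a b : ℝ) (ha : 0 < a) (hab : a < b) (hb : b ≤ δ) :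
    ∃ k l : ℕ → ℕ,
      (∀ n : ℕ, 0 < k n ∧ 0 < l n) ∧
      Function.Injective (fun n => (k n, l n)) ∧
      (∀ n : ℕ, g^[l n] x ∈ h '' (f^[k n] '' Set.Icc a b)) ∧
      Tendsto (fun n : ℕ => (k n : ℝ) / (l n : ℝ)) atTop
        (nhds (Real.log β / Real.log α)) := by
  obtain ⟨h₁, hc1, hinj1, hne1, h10, hd1, heq1⟩ := hlinf
  obtain ⟨h₂, hc2, hinj2, hne2, h20, hd2, heq2⟩ := hling
  have hα0 : 0 < α := hα ▸ hfNS.2.2.2.2.1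
  have hα1 : α < 1 := hα ▸ hfNS.2.2.2.2.2.1
  have hβ0 : 0 < β := hβ ▸ hgNS.2.2.2.2.1
  have hβ1 : β < 1 := hβ ▸ hgNS.2.2.2.2.2.1
  set p : ℝ := -Real.log α with hpdef
  set q : ℝ := -Real.log β with hqdef
  have hp : 0 < p := by rw [hpdef]; have := Real.log_neg hα0 hα1; linarith
  have hq : 0 < q := by rw [hqdef]; have := Real.log_neg hβ0 hβ1; linarith
  have hlogα : Real.log α = -p := by rw [hpdef]; ring
  have hlogβ : Real.log β = -q := by rw [hqdef]; ring
  have hirr : Irrational (p / q) := by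
    rintro ⟨r, hr⟩
    have hq0 : q ≠ 0 := hq.ne'
    have h1 : (r : ℝ) * q = p := by
      rw [hr]; field_simp
    have h2 := hind 1 (-r) (by
      rw [hlogα, hlogβ]
      push_cast
      linarith)
    exact absurd h2.1 one_ne_zero
  set c : ℝ := derivWithin h (Set.Icc 0 1) 0 with hcdef
  have hc : 0 < c := hhpos 0 ⟨le_rfl, zero_le_one⟩
  have hm1 : StrictMonoOn h₁ (Set.Icc 0 δ) := aux_smon hδ hc1 hne1 hd1
  have hm2 : StrictMonoOn h₂ (Set.Icc 0 δ) := aux_smon hδ hc2 hne2 hd2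
  have h0mem : (0:ℝ) ∈ Set.Icc 0 δ := ⟨le_rfl, hδ.le⟩
  have hamem : a ∈ Set.Icc 0 δ := ⟨ha.le, le_trans hab.le hb⟩
  have hbmem : b ∈ Set.Icc 0 δ := ⟨(lt_trans ha hab).le, hb⟩
  have hxmem : x ∈ Set.Icc 0 δ := ⟨hx.1.le, hx.2⟩
  set A : ℝ := h₁ a with hAdef
  set B : ℝ := h₁ b with hBdef
  set C : ℝ := h₂ x with hCdef
  have hA : 0 < A := by have := hm1 h0mem hamem ha; rwa [h10] at this
  have hAB : A < B := hm1 hamem hbmem hab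
  have hB : 0 < B := lt_trans hA hAB
  have hC : 0 < C := by have := hm2 h0mem hxmem hx.1; rwa [h20] at this
  have hblt1 : b < 1 := by
    rcases lt_or_eq_of_le (le_trans hb hδ1) with h' | h'
    · exact h'
    · exfalso
      have hfb : f b = b := by rw [h']; exact hfNS.2.2.1
      have he := heq1 b hbmem
      rw [hfb] at he
      have := mul_lt_mul_of_pos_right hα1 hB
      linarith
  have hxlt1 : x < 1 := by
    rcases lt_or_eq_of_le (le_trans hx.2 hδ1) with h' | h'
    · exact h'
    · exfalso
      have hgx : g x = x := by rw [h']; exact hgNS.2.2.1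
      have he := heq2 x hxmem
      rw [hgx] at he
      have := mul_lt_mul_of_pos_right hβ1 hC
      linarith
  have halt1 : a < 1 := lt_trans hab hblt1
  -- epsilon
  set ε : ℝ := (B - A) / (8 * (A + B)) with hεdef
  have hε : 0 < ε := by
    rw [hεdef]; exact div_pos (by linarith) (by positivity)
  have hε8 : ε ≤ 1/8 := by
    rw [hεdef, div_le_iff₀ (by positivity)]
    linarith [hA]
  have hε1 : ε < 1 := lt_of_le_of_lt hε8 (by norm_num)
  have h1ε : 0 < 1 - ε := by linarith
  have h1ε' : 0 < 1 + ε := by linarith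
  have h8 : 8 * (A + B) * ε = B - A := by
    rw [hεdef]; field_simp
  have hBA : 0 < B - A := sub_pos.mpr hAB
  have hεAB : ε * (A + B) = (B - A) / 8 := by linarith [h8]
  have hε2 : ε^2 ≤ 1/64 := by
    have hmm := mul_le_mul hε8 hε8 hε.le (by norm_num : (0:ℝ) ≤ 1/8)
    calc ε^2 = ε * ε := sq ε
      _ ≤ 1/8 * (1/8) := hmm
      _ = 1/64 := by norm_num
  have hcube : (1+ε)^3 * A < (1-ε)^3 * B := by
    have t3 : ε^3 * (A+B) ≤ (1/64) * ((B-A)/8) := by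
      calc ε^3 * (A+B) = ε^2 * (ε * (A+B)) := by ring
        _ = ε^2 * ((B-A)/8) := by rw [hεAB]
        _ ≤ (1/64) * ((B-A)/8) := mul_le_mul_of_nonneg_right hε2 (by linarith)
    have t4 : 3 * ε^2 * (A-B) ≤ 0 := by
      linarith [mul_nonneg (sq_nonneg ε) hBA.le]
    have key0 : (1+ε)^3 * A - (1-ε)^3 * B
        = (A - B) + 3 * (ε * (A+B)) + 3 * ε^2 * (A-B) + ε^3 * (A+B) := by ring
    linarith [t3, t4, key0, hBA, hεAB]
  have hder1 : HasDerivWithinAt h₁ 1 (Set.Icc 0 δ) 0 := by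
    have := (hc1.differentiableOn one_ne_zero 0 h0mem).hasDerivWithinAt
    rwa [hd1] at this
  have hder2 : HasDerivWithinAt h₂ 1 (Set.Icc 0 δ) 0 := by
    have := (hc2.differentiableOn one_ne_zero 0 h0mem).hasDerivWithinAt
    rwa [hd2] at this
  have hderh : HasDerivWithinAt h c (Set.Icc 0 1) 0 :=
    (hh1.differentiableOn one_ne_zero 0 ⟨le_rfl, zero_le_one⟩).hasDerivWithinAt
  obtain ⟨η₁, hη₁0, hη₁δ, hb₁⟩ := aux_slope_bound hδ hder1 h10 hε
  obtain ⟨η₂, hη₂0, hη₂δ, hb₂⟩ := aux_slope_bound hδ hder2 h20 hε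
  have hcε : 0 < c * ε := mul_pos hc hε
  obtain ⟨η₃, hη₃0, hη₃1, hb₃⟩ := aux_slope_bound one_pos hderh hh0 hcε
  set η : ℝ := min (min η₁ η₂) η₃ with hηdef
  have hη0 : 0 < η := lt_min (lt_min hη₁0 hη₂0) hη₃0
  have hηe1 : η ≤ η₁ := le_trans (min_le_left _ _) (min_le_left _ _)
  have hηe2 : η ≤ η₂ := le_trans (min_le_left _ _) (min_le_right _ _)
  have hηe3 : η ≤ η₃ := min_le_right _ _
  have hta := aux_ns_tendsto hfNS hf2.continuousOn hδ1 ⟨ha, le_trans hab.le hb⟩ halt1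
  have htb := aux_ns_tendsto hfNS hf2.continuousOn hδ1 ⟨lt_trans ha hab, hb⟩ hblt1
  have htx := aux_ns_tendsto hgNS hg2.continuousOn hδ1 hx hxlt1
  have hev : ∀ᶠ n : ℕ in Filter.atTop, f^[n] a < η ∧ f^[n] b < η ∧ g^[n] x < η := by
    filter_upwards [hta.eventually_lt_const hη0, htb.eventually_lt_const hη0,
      htx.eventually_lt_const hη0] with n t1 t2 t3
    exact ⟨t1, t2, t3⟩
  obtain ⟨N₀, hN₀⟩ := Filter.eventually_atTop.mp hev
  set K₁ : ℝ := (1+ε)^2 / (1-ε) with hK₁def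
  set K₂ : ℝ := (1-ε)^2 / (1+ε) with hK₂def
  have hK₁ : 0 < K₁ := by rw [hK₁def]; exact div_pos (by positivity) h1ε
  have hK₂ : 0 < K₂ := by rw [hK₂def]; exact div_pos (by positivity) h1ε'
  set D₁ : ℝ := Real.log c + Real.log K₁ + Real.log A - Real.log C with hD₁def
  set D₂ : ℝ := Real.log c + Real.log K₂ + Real.log B - Real.log C with hD₂def
  have hKAB : K₁ * A < K₂ * B := by
    rw [hK₁def, hK₂def, div_mul_eq_mul_div, div_mul_eq_mul_div, div_lt_div_iff₀ h1ε h1ε']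
    linarith [hcube]
  have hD : D₁ < D₂ := by
    have h1 : Real.log (K₁ * A) < Real.log (K₂ * B) :=
      Real.log_lt_log (by positivity) hKAB
    rw [Real.log_mul hK₁.ne' hA.ne', Real.log_mul hK₂.ne' hB.ne'] at h1
    rw [hD₁def, hD₂def]; linarith
  have hmapf := aux_ns_mem hfNS hδ1
  have hmapg := aux_ns_mem hgNS hδ1
  -- KEY analytic step
  have key : ∀ k l : ℕ, N₀ ≤ k → N₀ ≤ l →
      ((k:ℝ)*p - (l:ℝ)*q) ∈ Set.Icc D₁ D₂ →
      g^[l] x ∈ h '' (f^[k] '' Set.Icc a b) := by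
    intro k l hk hl hcond
    set u : ℝ := f^[k] a with hudef
    set v : ℝ := f^[k] b with hvdef
    set w : ℝ := g^[l] x with hwdef
    have hu : u ∈ Set.Ioc 0 δ := aux_ns_iter_mem hfNS hδ1 ⟨ha, le_trans hab.le hb⟩ k
    have hv : v ∈ Set.Ioc 0 δ := aux_ns_iter_mem hfNS hδ1 ⟨lt_trans ha hab, hb⟩ k
    have hw : w ∈ Set.Ioc 0 δ := aux_ns_iter_mem hgNS hδ1 hx l
    obtain ⟨hsa, hsb, -⟩ := hN₀ k hk
    obtain ⟨-, -, hsx⟩ := hN₀ l hl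
    have huη : u ≤ η := by rw [hudef]; exact hsa.le
    have hvη : v ≤ η := by rw [hvdef]; exact hsb.le
    have hwη : w ≤ η := by rw [hwdef]; exact hsx.le
    have h1u : h₁ u = α ^ k * A := by
      rw [hudef, hAdef]; exact aux_stern_iter hmapf heq1 hamem k
    have h1v : h₁ v = α ^ k * B := by
      rw [hvdef, hBdef]; exact aux_stern_iter hmapf heq1 hbmem k
    have h2w : h₂ w = β ^ l * C := by
      rw [hwdef, hCdef]; exact aux_stern_iter hmapg heq2 hxmem l
    have hαk : (0:ℝ) < α ^ k := pow_pos hα0 k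
    have hβl : (0:ℝ) < β ^ l := pow_pos hβ0 l
    have bu := hb₁ u hu.1 (le_trans huη hηe1)
    rw [h1u, one_mul] at bu
    have bv := hb₁ v hv.1 (le_trans hvη hηe1)
    rw [h1v, one_mul] at bv
    have bw := hb₂ w hw.1 (le_trans hwη hηe2)
    rw [h2w, one_mul] at bw
    have bu1 : (1-ε) * u ≤ α ^ k * A := by
      have := (abs_le.mp bu).1; linarith
    have bu2 : α ^ k * A ≤ (1+ε) * u := by
      have := (abs_le.mp bu).2; linarith
    have bv1 : (1-ε) * v ≤ α ^ k * B := by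
      have := (abs_le.mp bv).1; linarith
    have bv2 : α ^ k * B ≤ (1+ε) * v := by
      have := (abs_le.mp bv).2; linarith
    have bw1 : (1-ε) * w ≤ C * β ^ l := by
      have := (abs_le.mp bw).1; linarith
    have bw2 : C * β ^ l ≤ (1+ε) * w := by
      have := (abs_le.mp bw).2; linarith
    have bhu := hb₃ u hu.1 (le_trans huη hηe3)
    have bhv := hb₃ v hv.1 (le_trans hvη hηe3)
    have bhu2 : h u ≤ c * (1+ε) * u := by
      have := (abs_le.mp bhu).2; linarith
    have bhv1 : c * (1-ε) * v ≤ h v := by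
      have := (abs_le.mp bhv).1; linarith
    -- multiplicative form of the interval condition
    have e₂ : Real.log (C * β ^ l) = Real.log C + (l:ℝ) * Real.log β := by
      rw [Real.log_mul hC.ne' hβl.ne', Real.log_pow]
    have m1 : c * K₁ * A * α ^ k ≤ C * β ^ l := by
      rw [← Real.log_le_log_iff (by positivity) (by positivity)]
      have e₁ : Real.log (c * K₁ * A * α ^ k)
          = Real.log c + Real.log K₁ + Real.log A + (k:ℝ) * Real.log α := by
        rw [Real.log_mul (by positivity) hαk.ne', Real.log_mul (by positivity) hA.ne',
          Real.log_mul hc.ne' hK₁.ne', Real.log_pow]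
      rw [e₁, e₂, hlogα, hlogβ]
      have hcc := hcond.1
      rw [hD₁def] at hcc
      linarith
    have m2 : C * β ^ l ≤ c * K₂ * B * α ^ k := by
      rw [← Real.log_le_log_iff (by positivity) (by positivity)]
      have e₁ : Real.log (c * K₂ * B * α ^ k)
          = Real.log c + Real.log K₂ + Real.log B + (k:ℝ) * Real.log α := by
        rw [Real.log_mul (by positivity) hαk.ne', Real.log_mul (by positivity) hB.ne',
          Real.log_mul hc.ne' hK₂.ne', Real.log_pow]
      rw [e₁, e₂, hlogα, hlogβ]
      have hcc := hcond.2
      rw [hD₂def] at hcc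
      linarith
    -- chain 1 : h u ≤ w
    have m1' : c * (1+ε)^2 * A * α ^ k ≤ (1-ε) * (C * β ^ l) := by
      have hmm := mul_le_mul_of_nonneg_right m1 h1ε.le
      calc c * (1+ε)^2 * A * α ^ k = c * K₁ * A * α ^ k * (1-ε) := by
            rw [hK₁def]; field_simp; try ring
        _ ≤ C * β ^ l * (1-ε) := hmm
        _ = (1-ε) * (C * β ^ l) := by ring
    have chain1 : h u ≤ w := by
      have s1 : (1+ε) * ((1-ε) * h u) ≤ (1+ε) * ((1-ε) * (c * (1+ε) * u)) :=
        mul_le_mul_of_nonneg_left (mul_le_mul_of_nonneg_left bhu2 h1ε.le) h1ε'.le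
      have s3 : c * (1+ε)^2 * ((1-ε) * u) ≤ c * (1+ε)^2 * (α ^ k * A) :=
        mul_le_mul_of_nonneg_left bu1 (by positivity)
      have s5 : (1-ε) * (C * β ^ l) ≤ (1-ε) * ((1+ε) * w) :=
        mul_le_mul_of_nonneg_left bw2 h1ε.le
      have hfin : (1+ε) * ((1-ε) * h u) ≤ (1+ε) * ((1-ε) * w) := by
        calc (1+ε) * ((1-ε) * h u) ≤ (1+ε) * ((1-ε) * (c * (1+ε) * u)) := s1
          _ = c * (1+ε)^2 * ((1-ε) * u) := by ring
          _ ≤ c * (1+ε)^2 * (α ^ k * A) := s3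
          _ = c * (1+ε)^2 * A * α ^ k := by ring
          _ ≤ (1-ε) * (C * β ^ l) := m1'
          _ ≤ (1-ε) * ((1+ε) * w) := s5
          _ = (1+ε) * ((1-ε) * w) := by ring
      have h1' := le_of_mul_le_mul_left hfin h1ε'
      exact le_of_mul_le_mul_left h1' h1ε
    -- chain 2 : w ≤ h v
    have m2' : (1+ε) * (C * β ^ l) ≤ c * (1-ε)^2 * B * α ^ k := by
      have hmm := mul_le_mul_of_nonneg_right m2 h1ε'.le
      calc (1+ε) * (C * β ^ l) = C * β ^ l * (1+ε) := by ring
        _ ≤ c * K₂ * B * α ^ k * (1+ε) := hmm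
        _ = c * (1-ε)^2 * B * α ^ k := by rw [hK₂def]; field_simp; try ring
    have chain2 : w ≤ h v := by
      have s1 : (1+ε) * ((1-ε) * w) ≤ (1+ε) * (C * β ^ l) :=
        mul_le_mul_of_nonneg_left bw1 h1ε'.le
      have s3 : c * (1-ε)^2 * (α ^ k * B) ≤ c * (1-ε)^2 * ((1+ε) * v) :=
        mul_le_mul_of_nonneg_left bv2 (by positivity)
      have s5 : (1+ε) * ((1-ε) * (c * (1-ε) * v)) ≤ (1+ε) * ((1-ε) * h v) :=
        mul_le_mul_of_nonneg_left (mul_le_mul_of_nonneg_left bhv1 h1ε.le) h1ε'.le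
      have hfin : (1+ε) * ((1-ε) * w) ≤ (1+ε) * ((1-ε) * h v) := by
        calc (1+ε) * ((1-ε) * w) ≤ (1+ε) * (C * β ^ l) := s1
          _ ≤ c * (1-ε)^2 * B * α ^ k := m2'
          _ = c * (1-ε)^2 * (α ^ k * B) := by ring
          _ ≤ c * (1-ε)^2 * ((1+ε) * v) := s3
          _ = (1+ε) * ((1-ε) * (c * (1-ε) * v)) := by ring
          _ ≤ (1+ε) * ((1-ε) * h v) := s5
      have h1' := le_of_mul_le_mul_left hfin h1ε'
      exact le_of_mul_le_mul_left h1' h1ε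
    -- membership
    have huv : u < v := by
      by_contra hcon
      push_neg at hcon
      have hmono := hm1.monotoneOn (Set.Ioc_subset_Icc_self hv) (Set.Ioc_subset_Icc_self hu) hcon
      rw [h1u, h1v] at hmono
      linarith [mul_pos hαk (sub_pos.mpr hAB)]
    have hsubab : Set.Icc a b ⊆ Set.Icc 0 δ := Set.Icc_subset_Icc ha.le hb
    have hsub1 : Set.Icc u v ⊆ f^[k] '' Set.Icc a b := by
      have hcontk := (aux_iter_contOn hδ1 hf2.continuousOn hmapf k).mono hsubab
      have := intermediate_value_Icc hab.le hcontk
      rwa [← hudef, ← hvdef] at this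
    have hsub2 : Set.Icc (h u) (h v) ⊆ h '' Set.Icc u v := by
      apply intermediate_value_Icc huv.le
      exact hh1.continuousOn.mono (Set.Icc_subset_Icc hu.1.le (le_trans hv.2 hδ1))
    obtain ⟨y, hy, hyw⟩ := hsub2 ⟨chain1, chain2⟩
    exact ⟨y, hsub1 hy, hyw⟩
  -- construct the sequences
  have HNT : ∀ N : ℕ, ∃ kl : ℕ × ℕ, max N N₀ < kl.1 ∧ max N N₀ < kl.2 ∧
      ((kl.1:ℝ)*p - (kl.2:ℝ)*q) ∈ Set.Icc D₁ D₂ := by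
    intro N
    obtain ⟨k', l', h1, h2, h3⟩ := aux_nt_lemma p q D₁ D₂ hp hq hirr hD (max N N₀)
    exact ⟨(k', l'), h1, h2, h3⟩
  set F : ℕ → ℕ × ℕ :=
    fun n => Nat.rec (HNT 0).choose (fun _ prev => (HNT prev.1).choose) n with hFdef
  have hFs : ∀ n, F (n+1) = (HNT (F n).1).choose := fun n => rfl
  have hFspec : ∀ n, N₀ < (F n).1 ∧ N₀ < (F n).2 ∧
      (((F n).1:ℝ)*p - ((F n).2:ℝ)*q) ∈ Set.Icc D₁ D₂ := by
    intro n
    cases n with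
    | zero =>
      obtain ⟨h1, h2, h3⟩ := (HNT 0).choose_spec
      exact ⟨lt_of_le_of_lt (le_max_right 0 N₀) h1,
        lt_of_le_of_lt (le_max_right 0 N₀) h2, h3⟩
    | succ n =>
      obtain ⟨h1, h2, h3⟩ := (HNT (F n).1).choose_spec
      rw [hFs n]
      exact ⟨lt_of_le_of_lt (le_max_right _ _) h1,
        lt_of_le_of_lt (le_max_right _ _) h2, h3⟩
  have hFmono : StrictMono (fun n => (F n).1) := by
    apply strictMono_nat_of_lt_succ
    intro n
    obtain ⟨h1, -, -⟩ := (HNT (F n).1).choose_spec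
    have : (F n).1 < (F (n+1)).1 := by
      rw [hFs n]
      exact lt_of_le_of_lt (le_max_left _ _) h1
    exact this
  set kn : ℕ → ℕ := fun n => (F n).1 with hkndef
  set ln : ℕ → ℕ := fun n => (F n).2 with hlndef
  have hknpos : ∀ n, 0 < kn n := fun n => lt_of_le_of_lt (Nat.zero_le _) (hFspec n).1
  have hlnpos : ∀ n, 0 < ln n := fun n => lt_of_le_of_lt (Nat.zero_le _) (hFspec n).2.1
  have hknge : ∀ n, n ≤ kn n := fun n => hFmono.le_apply
  refine ⟨kn, ln, fun n => ⟨hknpos n, hlnpos n⟩, ?_, ?_, ?_⟩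
  · intro m n hmn
    simp only [Prod.mk.injEq] at hmn
    exact hFmono.injective hmn.1
  · intro n
    exact key _ _ (hFspec n).1.le (hFspec n).2.1.le (hFspec n).2.2
  · -- the limit
    set t : ℕ → ℝ := fun n => (kn n : ℝ) * p - (ln n : ℝ) * q with htdef
    set M : ℝ := max |D₁| |D₂| with hMdef
    have hM0 : 0 ≤ M := le_trans (abs_nonneg D₁) (le_max_left _ _)
    have htmem : ∀ n, |t n| ≤ M := by
      intro n
      obtain ⟨-, -, h3⟩ := hFspec n
      rw [abs_le]
      constructor
      · have h4 : -|D₁| ≤ D₁ := neg_abs_le _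
        have h5 : |D₁| ≤ M := le_max_left _ _
        have := h3.1
        simp only [htdef]
        linarith
      · have h4 : D₂ ≤ |D₂| := le_abs_self _
        have h5 : |D₂| ≤ M := le_max_right _ _
        have := h3.2
        simp only [htdef]
        linarith
    have ht0 : Tendsto (fun n => t n / (kn n : ℝ)) atTop (nhds 0) := by
      apply squeeze_zero_norm' (a := fun n : ℕ => M / (n : ℝ))
      · filter_upwards [Filter.eventually_ge_atTop 1] with n hn1
        have hkn' : (n:ℝ) ≤ (kn n : ℝ) := by exact_mod_cast hknge n
        have hnpos : (0:ℝ) < (n:ℝ) := by exact_mod_cast hn1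
        have hknpos' : (0:ℝ) < (kn n : ℝ) := by exact_mod_cast hknpos n
        rw [Real.norm_eq_abs, abs_div, abs_of_pos hknpos']
        exact div_le_div₀ hM0 (htmem n) hnpos hkn'
      · exact tendsto_const_div_atTop_nhds_zero_nat M
    have hlk : Tendsto (fun n => (ln n : ℝ) / (kn n : ℝ)) atTop (nhds (p / q)) := by
      have heqq : ∀ n, (ln n : ℝ) / (kn n : ℝ) = (p - t n / (kn n : ℝ)) / q := by
        intro n
        have hk0 : ((kn n : ℕ):ℝ) ≠ 0 := by
          have : (0:ℝ) < (kn n : ℝ) := by exact_mod_cast hknpos n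
          exact this.ne'
        simp only [htdef]
        field_simp
        ring
      have h2 : Tendsto (fun n => (p - t n / (kn n : ℝ)) / q) atTop (nhds ((p - 0) / q)) :=
        (tendsto_const_nhds.sub ht0).div_const q
      rw [sub_zero] at h2
      exact Tendsto.congr (fun n => (heqq n).symm) h2
    have hkl : Tendsto (fun n => (kn n : ℝ) / (ln n : ℝ)) atTop (nhds (q / p)) := by
      have hpq0 : p / q ≠ 0 := (div_pos hp hq).ne'
      have h3 := hlk.inv₀ hpq0
      rw [inv_div] at h3
      exact Tendsto.congr (fun n => by rw [inv_div]) h3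
    have hfinal : Real.log β / Real.log α = q / p := by
      rw [hlogα, hlogβ, neg_div_neg_eq]
    rw [hfinal]
    exact hkl
end

section
/- Let g be a C² NS-map on [0,1] and fix d ∈ (0,1). Set G = (max_{t ∈ [0,d]} |g''(t)|) / (min_{t ∈ [0,d]} g'(t)). Then for every positive integer l and all points x, y ∈ [g(d), d], the derivatives of the l-th iterate satisfy (g^l)'(x) / (g^l)'(y) ≥ e^{−G·d}. -/
open Set

/-- The distortion constant `G = (max_{t ∈ [0,d]} |g''(t)|) / (min_{t ∈ [0,d]} g'(t))`. -/
noncomputable def distortionConst (g : ℝ → ℝ) (d : ℝ) : ℝ :=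
  sSup ((fun t => |derivWithin (derivWithin g (Set.Icc 0 1)) (Set.Icc 0 1) t| ) ''
      Set.Icc 0 d) /
    sInf ((fun t => derivWithin g (Set.Icc 0 1) t) '' Set.Icc 0 d)

/-- Let `g` be a C² NS-map on `[0,1]` and fix `d ∈ (0,1)`. Set
`G = (max_{t ∈ [0,d]} |g''(t)|) / (min_{t ∈ [0,d]} g'(t))`. Then for every positive
integer `l` and all points `x, y ∈ [g(d), d]`, the derivatives of the `l`-th iterate
satisfy `(g^l)'(x) / (g^l)'(y) ≥ e^{−G·d}`. -/
theorem iterate_derivative_distortion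
    (g : ℝ → ℝ) (hg2 : ContDiffOn ℝ 2 g (Set.Icc 0 1)) (hg : IsNSMap g)
    (d : ℝ) (hd : d ∈ Set.Ioo (0 : ℝ) 1) :
    ∀ l : ℕ, 0 < l → ∀ x ∈ Set.Icc (g d) d, ∀ y ∈ Set.Icc (g d) d,
      derivWithin (g^[l]) (Set.Icc 0 1) x / derivWithin (g^[l]) (Set.Icc 0 1) y ≥
        Real.exp (-(distortionConst g d) * d) := by
  obtain ⟨hbij, hg0, hg1, hne, h0pos, -, -, hltid⟩ := hg
  have hu : UniqueDiffOn ℝ (Set.Icc (0:ℝ) 1) := uniqueDiffOn_Icc one_pos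
  set I : Set ℝ := Set.Icc 0 1 with hIdef
  set g' : ℝ → ℝ := derivWithin g I with hg'def
  set g'' : ℝ → ℝ := derivWithin g' I with hg''def
  have h1 : ContDiffOn ℝ 1 g' I := hg2.derivWithin hu (by norm_num)
  have hg'cont : ContinuousOn g' I := h1.continuousOn
  have hg''cont : ContinuousOn g'' I :=
    (h1.derivWithin hu (by norm_num) : ContDiffOn ℝ 0 g'' I).continuousOn
  have hgdiff : DifferentiableOn ℝ g I := hg2.differentiableOn (by norm_num)
  have hg'diff : DifferentiableOn ℝ g' I := h1.differentiableOn (by norm_num)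
  -- g' > 0 on I
  have hg'pos : ∀ t ∈ I, 0 < g' t := by
    intro t ht
    by_contra h
    push_neg at h
    have hlt0 : g' t < 0 := lt_of_le_of_ne h (hne t ht)
    obtain ⟨s, hs, hs0⟩ := intermediate_value_Icc' ht.1
      (hg'cont.mono (Icc_subset_Icc le_rfl ht.2)) ⟨hlt0.le, h0pos.le⟩
    exact hne s ⟨hs.1, hs.2.trans ht.2⟩ hs0
  have hgd : ∀ t ∈ I, HasDerivWithinAt g (g' t) I t :=
    fun t ht => (hgdiff t ht).hasDerivWithinAt
  have hg'd : ∀ t ∈ I, HasDerivWithinAt g' (g'' t) I t :=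
    fun t ht => (hg'diff t ht).hasDerivWithinAt
  have hmono : MonotoneOn g I :=
    monotoneOn_of_hasDerivWithinAt_nonneg (convex_Icc _ _) hg2.continuousOn
      (fun x hx => ((hgd x (interior_subset hx)).mono interior_subset))
      (fun x hx => (hg'pos x (interior_subset hx)).le)
  have hmaps : MapsTo g I I := hbij.mapsTo
  have hdI : d ∈ I := ⟨hd.1.le, hd.2.le⟩
  have hsub : Icc (0:ℝ) d ⊆ I := Icc_subset_Icc le_rfl hd.2.le
  have hgle : ∀ t ∈ Icc (0:ℝ) d, g t ≤ t := by
    intro t ht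
    rcases eq_or_lt_of_le ht.1 with h | h
    · rw [← h, hg0]
    · exact (hltid t ⟨h, lt_of_le_of_lt ht.2 hd.2⟩).le
  have hmaps0d : MapsTo g (Icc (0:ℝ) d) (Icc 0 d) := by
    intro t ht
    refine ⟨?_, le_trans (hgle t ht) ht.2⟩
    rw [← hg0]
    exact hmono (hsub ⟨le_rfl, hd.1.le⟩) (hsub ht) ht.1
  have hdd : d ∈ Icc (0:ℝ) d := ⟨hd.1.le, le_rfl⟩
  have hD : ∀ i, g^[i] d ∈ Icc (0:ℝ) d := fun i => hmaps0d.iterate i hdd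
  -- orbit of a point of [g d, d]
  have horb : ∀ x ∈ Icc (g d) d, ∀ i : ℕ,
      g^[i] x ∈ Icc (g^[i+1] d) (g^[i] d) := by
    intro x hx i
    induction i with
    | zero => simpa using hx
    | succ n ih =>
      have hxn : g^[n] x ∈ Icc (0:ℝ) d :=
        ⟨le_trans (hD (n+1)).1 ih.1, le_trans ih.2 (hD n).2⟩
      constructor
      · rw [Function.iterate_succ_apply' g (n+1) d, Function.iterate_succ_apply' g n x]
        exact hmono (hsub (hD (n+1))) (hsub hxn) ih.1
      · rw [Function.iterate_succ_apply' g n d, Function.iterate_succ_apply' g n x]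
        exact hmono (hsub hxn) (hsub (hD n)) ih.2
  have horb0d : ∀ x ∈ Icc (g d) d, ∀ i : ℕ, g^[i] x ∈ Icc (0:ℝ) d := by
    intro x hx i
    exact ⟨le_trans (hD (i+1)).1 (horb x hx i).1, le_trans (horb x hx i).2 (hD i).2⟩
  -- chain rule for iterates
  have hiter : ∀ l : ℕ, ∀ t ∈ I,
      HasDerivWithinAt (g^[l]) (∏ i ∈ Finset.range l, g' (g^[i] t)) I t := by
    intro l
    induction l with
    | zero =>
      intro t ht
      simpa using (hasDerivWithinAt_id t I)
    | succ n ih =>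
      intro t ht
      have h2 : HasDerivWithinAt g (g' (g^[n] t)) I (g^[n] t) :=
        hgd _ (hmaps.iterate n ht)
      have h3 := HasDerivWithinAt.comp t h2 (ih t ht) (hmaps.iterate n)
      rw [Function.iterate_succ' g n]
      simpa [Finset.prod_range_succ, mul_comm] using h3
  -- distortion constant facts
  set K : Set ℝ := (fun t => |g'' t|) '' Icc 0 d with hKdef
  set M : Set ℝ := (fun t => g' t) '' Icc 0 d with hMdef
  have hGdef : distortionConst g d = sSup K / sInf M := rfl
  have hKcomp : IsCompact K := isCompact_Icc.image_of_continuousOn ((hg''cont.mono hsub).abs)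
  have hMcomp : IsCompact M := isCompact_Icc.image_of_continuousOn (hg'cont.mono hsub)
  have hKne : K.Nonempty := (nonempty_Icc.2 hd.1.le).image _
  have hMne : M.Nonempty := (nonempty_Icc.2 hd.1.le).image _
  have hS : ∀ t ∈ Icc (0:ℝ) d, |g'' t| ≤ sSup K :=
    fun t ht => le_csSup hKcomp.bddAbove (mem_image_of_mem _ ht)
  have hm_le : ∀ t ∈ Icc (0:ℝ) d, sInf M ≤ g' t :=
    fun t ht => csInf_le hMcomp.bddBelow (mem_image_of_mem _ ht)
  have hmpos : 0 < sInf M := by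
    obtain ⟨t, ht, hteq⟩ := hMcomp.sInf_mem hMne
    exact hteq ▸ hg'pos t (hsub ht)
  have hSnn : 0 ≤ sSup K :=
    le_trans (abs_nonneg _) (hS 0 ⟨le_rfl, hd.1.le⟩)
  have hGnn : 0 ≤ distortionConst g d := by
    rw [hGdef]; exact div_nonneg hSnn hmpos.le
  -- log-Lipschitz estimate
  have hlogLip : ∀ a ∈ Icc (0:ℝ) d, ∀ b ∈ Icc (0:ℝ) d,
      |Real.log (g' a) - Real.log (g' b)| ≤ distortionConst g d * |a - b| := by
    intro a ha b hb
    have key := Convex.norm_image_sub_le_of_norm_hasDerivWithin_le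
      (f := fun t => Real.log (g' t)) (f' := fun t => g'' t / g' t)
      (s := Icc (0:ℝ) d) (C := distortionConst g d)
      (fun t ht => ((hg'd t (hsub ht)).mono hsub).log (ne_of_gt (hg'pos t (hsub ht))))
      (fun t ht => by
        rw [Real.norm_eq_abs, abs_div, abs_of_pos (hg'pos t (hsub ht)), hGdef]
        exact div_le_div₀ hSnn (hS t ht) hmpos (hm_le t ht))
      (convex_Icc _ _) hb ha
    simpa [Real.norm_eq_abs] using key
  -- main argument
  intro l _ x hx y hy
  have hxI : x ∈ I := hsub (horb0d x hx 0)
  have hyI : y ∈ I := hsub (horb0d y hy 0)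
  set P : ℝ := ∏ i ∈ Finset.range l, g' (g^[i] x) with hPdef
  set Q : ℝ := ∏ i ∈ Finset.range l, g' (g^[i] y) with hQdef
  have hPpos : 0 < P := Finset.prod_pos fun i _ => hg'pos _ (hsub (horb0d x hx i))
  have hQpos : 0 < Q := Finset.prod_pos fun i _ => hg'pos _ (hsub (horb0d y hy i))
  have hderivx : derivWithin (g^[l]) I x = P :=
    (hiter l x hxI).derivWithin (hu x hxI)
  have hderivy : derivWithin (g^[l]) I y = Q :=
    (hiter l y hyI).derivWithin (hu y hyI)
  rw [hderivx, hderivy, ge_iff_le,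
    show P / Q = Real.exp (Real.log P - Real.log Q) by
      rw [Real.exp_sub, Real.exp_log hPpos, Real.exp_log hQpos]]
  apply Real.exp_le_exp.2
  have hlogP : Real.log P = ∑ i ∈ Finset.range l, Real.log (g' (g^[i] x)) :=
    Real.log_prod fun i _ => ne_of_gt (hg'pos _ (hsub (horb0d x hx i)))
  have hlogQ : Real.log Q = ∑ i ∈ Finset.range l, Real.log (g' (g^[i] y)) :=
    Real.log_prod fun i _ => ne_of_gt (hg'pos _ (hsub (horb0d y hy i)))
  rw [hlogP, hlogQ, ← Finset.sum_sub_distrib]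
  have hterm : ∀ i ∈ Finset.range l,
      -(distortionConst g d * (g^[i] d - g^[i+1] d)) ≤
        Real.log (g' (g^[i] x)) - Real.log (g' (g^[i] y)) := by
    intro i _
    have hxi := horb x hx i
    have hyi := horb y hy i
    have habs : |g^[i] x - g^[i] y| ≤ g^[i] d - g^[i+1] d := by
      rw [abs_sub_le_iff]
      constructor <;> [linarith [hxi.1, hxi.2, hyi.1, hyi.2]; linarith [hxi.1, hxi.2, hyi.1, hyi.2]]
    have h1 := hlogLip _ (horb0d x hx i) _ (horb0d y hy i)
    have h2 : distortionConst g d * |g^[i] x - g^[i] y| ≤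
        distortionConst g d * (g^[i] d - g^[i+1] d) :=
      mul_le_mul_of_nonneg_left habs hGnn
    have h3 := neg_abs_le (Real.log (g' (g^[i] x)) - Real.log (g' (g^[i] y)))
    linarith
  have hsum := Finset.sum_le_sum hterm
  have htel : ∑ i ∈ Finset.range l, (g^[i] d - g^[i+1] d) = d - g^[l] d := by
    simpa using Finset.sum_range_sub' (fun i => g^[i] d) l
  have hsum2 : ∑ i ∈ Finset.range l, -(distortionConst g d * (g^[i] d - g^[i+1] d)) =
      -(distortionConst g d * (d - g^[l] d)) := by
    simp only [← neg_mul]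
    rw [← Finset.mul_sum, htel, neg_mul]
  have hDl : 0 ≤ g^[l] d := (hD l).1
  have hprod : 0 ≤ distortionConst g d * g^[l] d := mul_nonneg hGnn hDl
  calc -(distortionConst g d) * d ≤ -(distortionConst g d * (d - g^[l] d)) := by ring_nf; linarith
    _ = ∑ i ∈ Finset.range l, -(distortionConst g d * (g^[i] d - g^[i+1] d)) := hsum2.symm
    _ ≤ _ := hsum
end

section
/- Let f be a C² diffeomorphism from a neighborhood of 0 in [0, ∞) onto its image with f(0) = 0. If f'(0) = α ≠ 1, then there exists a C¹ local diffeomorphism h from a neighborhood of 0 in [0, ∞) onto its image with h(0) = 0, h'(0) = 1, and h(f(t)) = α · h(t) for all t in a neighborhood of 0. -/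
open Set


/-- Sum of `c` along orbits of a contraction `φ`. -/
lemma sternberg_series (β K r : ℝ) (hβ : 0 < β) (hr0 : 0 ≤ r) (hr1 : r < 1)
    (c φ : ℝ → ℝ) (hc : ContinuousOn c (Icc 0 β)) (hK : 0 ≤ K)
    (hcb : ∀ t ∈ Icc (0:ℝ) β, |c t| ≤ K * t)
    (hφc : ContinuousOn φ (Icc 0 β))
    (hφ1 : ∀ t ∈ Icc (0:ℝ) β, 0 ≤ φ t) (hφ2 : ∀ t ∈ Icc (0:ℝ) β, φ t ≤ r * t) :
    ∃ U : ℝ → ℝ, ContinuousOn U (Icc 0 β) ∧ U 0 = 0 ∧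
      ∀ t ∈ Icc (0:ℝ) β, U t = c t + U (φ t) := by
  have orbit : ∀ k : ℕ, ∀ t ∈ Icc (0:ℝ) β, φ^[k] t ∈ Icc (0:ℝ) β ∧ φ^[k] t ≤ r ^ k * t := by
    intro k
    induction k with
    | zero => intro t ht; exact ⟨ht, by simp⟩
    | succ n ih =>
      intro t ht
      obtain ⟨hmem, hle⟩ := ih t ht
      rw [Function.iterate_succ_apply']
      have h1 : 0 ≤ φ (φ^[n] t) := hφ1 _ hmem
      have h2 : φ (φ^[n] t) ≤ r * φ^[n] t := hφ2 _ hmem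
      refine ⟨⟨h1, ?_⟩, ?_⟩
      · nlinarith [hmem.1, hmem.2]
      · have : r * φ^[n] t ≤ r * (r ^ n * t) := by nlinarith
        calc φ (φ^[n] t) ≤ r * (r ^ n * t) := le_trans h2 this
          _ = r ^ (n + 1) * t := by ring
  have hbound : ∀ (k : ℕ), ∀ t ∈ Icc (0:ℝ) β, ‖c (φ^[k] t)‖ ≤ K * β * r ^ k := by
    intro k t ht
    obtain ⟨hmem, hle⟩ := orbit k t ht
    have h := hcb _ hmem
    have hrk : (0:ℝ) ≤ r ^ k := pow_nonneg hr0 k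
    calc ‖c (φ^[k] t)‖ = |c (φ^[k] t)| := rfl
      _ ≤ K * φ^[k] t := h
      _ ≤ K * (r ^ k * t) := by nlinarith [hmem.1]
      _ = (K * r ^ k) * t := by ring
      _ ≤ (K * r ^ k) * β := by
          exact mul_le_mul_of_nonneg_left ht.2 (mul_nonneg hK hrk)
      _ = K * β * r ^ k := by ring
  have hsum : Summable (fun k : ℕ => K * β * r ^ k) :=
    (summable_geometric_of_lt_one hr0 hr1).mul_left (K * β)
  have hsummable : ∀ t ∈ Icc (0:ℝ) β, Summable (fun k : ℕ => c (φ^[k] t)) := by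
    intro t ht
    exact Summable.of_norm_bounded hsum (fun k => hbound k t ht)
  have hitercont : ∀ k : ℕ, ContinuousOn (fun t => φ^[k] t) (Icc 0 β) := by
    intro k
    induction k with
    | zero => exact continuousOn_id
    | succ n ih =>
      simp only [Function.iterate_succ', Function.comp_def]
      exact hφc.comp ih (fun t ht => (orbit n t ht).1)
  refine ⟨fun t => ∑' k : ℕ, c (φ^[k] t), ?_, ?_, ?_⟩
  · exact continuousOn_tsum (fun k => hc.comp (hitercont k) (fun t ht => (orbit k t ht).1))
      hsum (fun k t ht => hbound k t ht)
  · have h0 : ∀ k : ℕ, φ^[k] (0:ℝ) = 0 := by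
      intro k
      have h := orbit k 0 ⟨le_refl 0, hβ.le⟩
      have h1 := h.1.1
      have h2 := h.2
      simp only [mul_zero] at h2
      linarith
    have hc0 : c 0 = 0 := by
      have h := hcb 0 ⟨le_refl 0, hβ.le⟩
      simp only [mul_zero] at h
      exact abs_eq_zero.mp (le_antisymm h (abs_nonneg _))
    simp only [h0, hc0, tsum_zero]
  · intro t ht
    show (∑' k : ℕ, c (φ^[k] t)) = c t + ∑' k : ℕ, c (φ^[k] (φ t))
    rw [Summable.tsum_eq_zero_add (hsummable t ht)]
    simp only [Function.iterate_zero_apply, Function.iterate_succ_apply]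


/-- Lower linear bound from a lower bound on the derivative. -/
lemma sternberg_lin_bound (f g' : ℝ → ℝ) (b m : ℝ) (hb : 0 < b)
    (hfd : ∀ x ∈ Icc (0:ℝ) b, HasDerivWithinAt f (g' x) (Icc 0 b) x)
    (hm : ∀ s ∈ Icc (0:ℝ) b, m ≤ g' s) : ∀ t ∈ Icc (0:ℝ) b, f 0 + m * t ≤ f t := by
  have hda : ∀ x ∈ Ioo (0:ℝ) b, HasDerivAt f (g' x) x := by
    intro x hx
    exact (hfd x ⟨hx.1.le, hx.2.le⟩).hasDerivAt (Icc_mem_nhds hx.1 hx.2)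
  have hmono : MonotoneOn (fun t => f t - m * t) (Icc 0 b) := by
    apply monotoneOn_of_deriv_nonneg (convex_Icc 0 b)
    · exact ContinuousOn.sub (fun x hx => (hfd x hx).continuousWithinAt)
        (Continuous.continuousOn (by continuity))
    · rw [interior_Icc]
      intro x hx
      exact ((hda x hx).sub ((hasDerivAt_id x).const_mul m)).differentiableAt.differentiableWithinAt
    · rw [interior_Icc]
      intro x hx
      have hD : HasDerivAt (fun t => f t - m * t) (g' x - m * 1) x :=
        (hda x hx).sub ((hasDerivAt_id x).const_mul m)
      rw [hD.deriv]
      have := hm x ⟨hx.1.le, hx.2.le⟩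
      linarith
  intro t ht
  have := hmono ⟨le_refl 0, hb.le⟩ ht ht.1
  simp only [mul_zero, sub_zero] at this
  linarith

lemma sternberg_abs_log (x : ℝ) (hx : 1/2 ≤ x) : |Real.log x| ≤ 2 * |x - 1| := by
  have hx0 : 0 < x := by linarith
  rcases le_total 1 x with h | h
  · rw [abs_of_nonneg (Real.log_nonneg h), abs_of_nonneg (by linarith : (0:ℝ) ≤ x - 1)]
    have := Real.log_le_sub_one_of_pos hx0
    linarith
  · rw [abs_of_nonpos (Real.log_nonpos hx0.le h), abs_of_nonpos (by linarith : x - 1 ≤ 0)]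
    have h1 : Real.log x⁻¹ ≤ x⁻¹ - 1 := Real.log_le_sub_one_of_pos (inv_pos.2 hx0)
    rw [Real.log_inv] at h1
    have h2 : x⁻¹ - 1 ≤ 2 * (1 - x) := by
      rw [inv_eq_one_div]
      rw [div_sub' hx0.ne', div_le_iff₀ hx0]
      nlinarith
    linarith

/-- From a continuous `u` with the cocycle relation, build the linearizing map. -/
lemma sternberg_build (f f' u : ℝ → ℝ) (α δ : ℝ) (hδ : 0 < δ)
    (hu : Continuous u) (hu0 : u 0 = 0) (hf0 : f 0 = 0)
    (hfd : ∀ t ∈ Icc (0:ℝ) δ, HasDerivWithinAt f (f' t) (Icc 0 δ) t)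
    (hf'c : ContinuousOn f' (Icc 0 δ))
    (hrel : ∀ t ∈ Icc (0:ℝ) δ, Real.exp (u (f t)) * f' t = α * Real.exp (u t)) :
    ∃ h : ℝ → ℝ,
      ContDiffOn ℝ 1 h (Icc 0 δ) ∧ InjOn h (Icc 0 δ) ∧
      (∀ t ∈ Icc (0:ℝ) δ, derivWithin h (Icc 0 δ) t ≠ 0) ∧
      h 0 = 0 ∧ derivWithin h (Icc 0 δ) 0 = 1 ∧
      ∀ t ∈ Icc (0:ℝ) δ, h (f t) = α * h t := by
  set E : ℝ → ℝ := fun s => Real.exp (u s) with hE_def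
  have hE : Continuous E := Real.continuous_exp.comp hu
  set h : ℝ → ℝ := fun t => ∫ s in (0:ℝ)..t, E s with hh_def
  have hasD : ∀ t : ℝ, HasDerivAt h (E t) t := fun t =>
    (hE.integral_hasStrictDerivAt 0 t).hasDerivAt
  have hderiv_eq : deriv h = E := funext fun t => (hasD t).deriv
  have hC1 : ContDiff ℝ 1 h := by
    rw [contDiff_one_iff_deriv]
    exact ⟨fun t => (hasD t).differentiableAt, hderiv_eq ▸ hE⟩
  have hdW : ∀ t ∈ Icc (0:ℝ) δ, derivWithin h (Icc 0 δ) t = E t := fun t ht =>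
    ((hasD t).hasDerivWithinAt).derivWithin (uniqueDiffOn_Icc hδ t ht)
  have hmono : StrictMonoOn h (Icc 0 δ) := by
    apply strictMonoOn_of_deriv_pos (convex_Icc 0 δ) hC1.continuous.continuousOn
    intro x _
    rw [(hasD x).deriv]
    exact Real.exp_pos _
  refine ⟨h, hC1.contDiffOn, hmono.injOn, ?_, ?_, ?_, ?_⟩
  · intro t ht
    rw [hdW t ht]
    exact (Real.exp_pos _).ne'
  · simp [hh_def]
  · rw [hdW 0 ⟨le_refl 0, hδ.le⟩]
    simp [hE_def, hu0]
  · intro t ht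
    have huIcc : uIcc (0:ℝ) t = Icc 0 t := uIcc_of_le ht.1
    have hsubset : Icc (0:ℝ) t ⊆ Icc 0 δ := Icc_subset_Icc_right ht.2
    have hcf : ContinuousOn f (uIcc (0:ℝ) t) := by
      rw [huIcc]
      exact fun x hx => ((hfd x (hsubset hx)).continuousWithinAt).mono hsubset
    have hff' : ∀ x ∈ Ioo (min (0:ℝ) t) (max 0 t), HasDerivWithinAt f (f' x) (Ioi x) x := by
      intro x hx
      rw [min_eq_left ht.1, max_eq_right ht.1] at hx
      have hxm : x ∈ Icc (0:ℝ) δ := ⟨hx.1.le, (hx.2.trans_le ht.2).le⟩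
      exact (((hfd x hxm).hasDerivAt
        (Icc_mem_nhds hx.1 (hx.2.trans_le ht.2))).hasDerivWithinAt)
    have hcf' : ContinuousOn f' (uIcc (0:ℝ) t) := by
      rw [huIcc]; exact hf'c.mono hsubset
    have hsub := intervalIntegral.integral_comp_smul_deriv'' (a := 0) (b := t)
      hcf hff' hcf' (hE.continuousOn (s := f '' uIcc 0 t))
    rw [hf0] at hsub
    have hcongr : ∀ x ∈ uIcc (0:ℝ) t, f' x • (E ∘ f) x = α * E x := by
      intro x hx
      rw [huIcc] at hx
      have := hrel x (hsubset hx)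
      simp only [Function.comp_apply, smul_eq_mul]
      rw [mul_comm]
      exact this
    have : (∫ x in (0:ℝ)..t, f' x • (E ∘ f) x) = ∫ x in (0:ℝ)..t, α * E x :=
      intervalIntegral.integral_congr hcongr
    rw [this] at hsub
    rw [intervalIntegral.integral_const_mul] at hsub
    exact hsub.symm

set_option maxHeartbeats 2000000 in
/-- one-dimensional C¹ Sternberg linearization theorem: Let `f` be a C²
diffeomorphism from a neighborhood of `0` in `[0, ∞)` onto its image with `f(0) = 0`.
If `f'(0) = α ≠ 1`, then there exists a C¹ local diffeomorphism `h` from a neighborhood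
of `0` in `[0, ∞)` onto its image with `h(0) = 0`, `h'(0) = 1`, and
`h(f(t)) = α · h(t)` for all `t` in a neighborhood of `0`. -/
theorem sternberg_linearization_C1
    (f : ℝ → ℝ) (ε : ℝ) (hε : 0 < ε)
    (hf2 : ContDiffOn ℝ 2 f (Set.Icc 0 ε))
    (hf0 : f 0 = 0)
    (hinj : Set.InjOn f (Set.Icc 0 ε))
    (hmaps : Set.MapsTo f (Set.Icc 0 ε) (Set.Ici 0))
    (hderiv : ∀ t ∈ Set.Icc (0 : ℝ) ε, derivWithin f (Set.Icc 0 ε) t ≠ 0)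
    (α : ℝ) (hα : derivWithin f (Set.Icc 0 ε) 0 = α) (hα1 : α ≠ 1) :
    ∃ δ > (0 : ℝ), ∃ h : ℝ → ℝ,
      ContDiffOn ℝ 1 h (Set.Icc 0 δ) ∧
      Set.InjOn h (Set.Icc 0 δ) ∧
      (∀ t ∈ Set.Icc (0 : ℝ) δ, derivWithin h (Set.Icc 0 δ) t ≠ 0) ∧
      h 0 = 0 ∧
      derivWithin h (Set.Icc 0 δ) 0 = 1 ∧
      ∀ t ∈ Set.Icc (0 : ℝ) δ, h (f t) = α * h t := by
  have UD : UniqueDiffOn ℝ (Icc (0:ℝ) ε) := uniqueDiffOn_Icc hε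
  set f' : ℝ → ℝ := derivWithin f (Icc 0 ε) with hf'def
  have hdiff : DifferentiableOn ℝ f (Icc 0 ε) := hf2.differentiableOn (by norm_num)
  have hfd : ∀ t ∈ Icc (0:ℝ) ε, HasDerivWithinAt f (f' t) (Icc 0 ε) t :=
    fun t ht => (hdiff t ht).hasDerivWithinAt
  have hf'c : ContinuousOn f' (Icc 0 ε) := hf2.continuousOn_derivWithin UD one_le_two
  have hf'1 : ContDiffOn ℝ 1 f' (Icc 0 ε) := hf2.derivWithin UD (by norm_num)
  have hf''c : ContinuousOn (derivWithin f' (Icc 0 ε)) (Icc 0 ε) :=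
    hf'1.continuousOn_derivWithin UD le_rfl
  obtain ⟨C0, hC0⟩ := isCompact_Icc.exists_bound_of_continuousOn hf''c
  set C : ℝ := max C0 0 with hCdef
  have hC : 0 ≤ C := le_max_right _ _
  have hlip : ∀ s ∈ Icc (0:ℝ) ε, |f' s - α| ≤ C * s := by
    intro s hs
    have hb : ∀ x ∈ Icc (0:ℝ) ε, ‖derivWithin f' (Icc 0 ε) x‖ ≤ C :=
      fun x hx => (hC0 x hx).trans (le_max_left _ _)
    have := Convex.norm_image_sub_le_of_norm_derivWithin_le
      (hf'1.differentiableOn one_ne_zero) hb (convex_Icc 0 ε) (x := 0) (y := s)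
      ⟨le_refl 0, hε.le⟩ hs
    simpa [hα, Real.norm_eq_abs, abs_of_nonneg hs.1] using this
  have hkey : ∀ y : ℝ, 0 ≤ y → C * (y/(C+1)) ≤ y := by
    intro y hy
    rw [mul_div_assoc', div_le_iff₀ (by linarith : (0:ℝ) < C + 1)]
    nlinarith
  have hα0 : α ≠ 0 := by
    rw [← hα]; exact hderiv 0 ⟨le_refl 0, hε.le⟩
  have hαpos : 0 < α := by
    by_contra hneg
    push_neg at hneg
    have hαneg : α < 0 := lt_of_le_of_ne hneg hα0
    set δ' : ℝ := min ε ((-α/2)/(C+1)) with hδ'def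
    have hδ'pos : 0 < δ' := lt_min hε (div_pos (by linarith) (by linarith))
    have hδ'ε : δ' ≤ ε := min_le_left _ _
    have hsub : Icc (0:ℝ) δ' ⊆ Icc 0 ε := Icc_subset_Icc_right hδ'ε
    have hf'neg : ∀ x ∈ Ioo (0:ℝ) δ', deriv f x < 0 := by
      intro x hx
      have hxε : x ∈ Icc (0:ℝ) ε := ⟨hx.1.le, hx.2.le.trans hδ'ε⟩
      have hda : HasDerivAt f (f' x) x :=
        (hfd x hxε).hasDerivAt (Icc_mem_nhds hx.1 (hx.2.trans_le hδ'ε))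
      rw [hda.deriv]
      have h1 := hlip x hxε
      have h2 : C * x ≤ C * δ' := mul_le_mul_of_nonneg_left hx.2.le hC
      have h3 : C * δ' ≤ -α/2 := by
        have h4 : δ' ≤ (-α/2)/(C+1) := min_le_right _ _
        calc C * δ' ≤ C * ((-α/2)/(C+1)) := mul_le_mul_of_nonneg_left h4 hC
          _ ≤ -α/2 := hkey _ (by linarith)
      have := abs_le.mp h1
      linarith [this.2]
    have hanti : StrictAntiOn f (Icc 0 δ') := by
      apply strictAntiOn_of_deriv_neg (convex_Icc 0 δ')
        (fun x hx => ((hfd x (hsub hx)).continuousWithinAt).mono hsub)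
      rw [interior_Icc]; exact hf'neg
    have := hanti ⟨le_refl 0, hδ'pos.le⟩ ⟨hδ'pos.le, le_refl δ'⟩ hδ'pos
    rw [hf0] at this
    have := hmaps (hsub ⟨hδ'pos.le, le_refl δ'⟩)
    simp only [mem_Ici] at this
    linarith
  rcases lt_or_gt_of_ne hα1 with hlt | hgt
  · -- contracting case: α < 1
    set r : ℝ := (1+α)/2 with hrdef
    have hrα : α < r := by rw [hrdef]; linarith
    have hr1 : r < 1 := by rw [hrdef]; linarith
    have hr0 : 0 < r := by rw [hrdef]; linarith
    set δ : ℝ := min ε (min ((r-α)/(C+1)) ((α/2)/(C+1))) with hδdef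
    have hδpos : 0 < δ := lt_min hε (lt_min (div_pos (by linarith) (by linarith))
      (div_pos (by linarith) (by linarith)))
    have hδε : δ ≤ ε := min_le_left _ _
    have hsub : Icc (0:ℝ) δ ⊆ Icc 0 ε := Icc_subset_Icc_right hδε
    have hCδ1 : C * δ ≤ r - α :=
      (mul_le_mul_of_nonneg_left ((min_le_right _ _).trans (min_le_left _ _)) hC).trans
        (hkey _ (by linarith))
    have hCδ2 : C * δ ≤ α/2 :=
      (mul_le_mul_of_nonneg_left ((min_le_right _ _).trans (min_le_right _ _)) hC).trans
        (hkey _ (by linarith))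
    have hbnd : ∀ s ∈ Icc (0:ℝ) δ, α/2 ≤ f' s ∧ f' s ≤ r := by
      intro s hs
      have h2 := abs_le.mp (hlip s (hsub hs))
      have h3 : C * s ≤ C * δ := mul_le_mul_of_nonneg_left hs.2 hC
      constructor <;> linarith [h2.1, h2.2]
    have hfdδ : ∀ t ∈ Icc (0:ℝ) δ, HasDerivWithinAt f (f' t) (Icc 0 δ) t :=
      fun t ht => (hfd t (hsub ht)).mono hsub
    have hflow : ∀ t ∈ Icc (0:ℝ) δ, α/2 * t ≤ f t := by
      intro t ht
      have := sternberg_lin_bound f f' δ (α/2) hδpos hfdδ (fun s hs => (hbnd s hs).1) t ht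
      rw [hf0] at this; linarith
    have hfup : ∀ t ∈ Icc (0:ℝ) δ, f t ≤ r * t := by
      intro t ht
      have hneg : ∀ x ∈ Icc (0:ℝ) δ, HasDerivWithinAt (fun y => -f y) (-(f' x)) (Icc 0 δ) x :=
        fun x hx => (hfdδ x hx).neg
      have := sternberg_lin_bound (fun y => -f y) (fun y => -(f' y)) δ (-r) hδpos hneg
        (fun s hs => by show -r ≤ -(f' s); linarith [(hbnd s hs).2]) t ht
      simp only [hf0, neg_zero, zero_add] at this
      linarith
    have hmapsδ : ∀ t ∈ Icc (0:ℝ) δ, f t ∈ Icc (0:ℝ) δ := by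
      intro t ht
      refine ⟨?_, ?_⟩
      · have := hflow t ht; nlinarith [ht.1]
      · have := hfup t ht; nlinarith [ht.1, ht.2]
    set c : ℝ → ℝ := fun s => Real.log (f' s / α) with hcdef
    have hcc : ContinuousOn c (Icc 0 δ) :=
      ContinuousOn.log ((hf'c.mono hsub).div_const α)
        (fun s hs => div_ne_zero (by linarith [(hbnd s hs).1]) hα0)
    set K : ℝ := 2*C/α with hKdef
    have hK : 0 ≤ K := by positivity
    have hcb : ∀ t ∈ Icc (0:ℝ) δ, |c t| ≤ K * t := by
      intro t ht
      have hb := hbnd t ht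
      have hhalf : 1/2 ≤ f' t / α := by rw [le_div_iff₀ hαpos]; linarith
      have hlog := sternberg_abs_log _ hhalf
      have habs : |f' t / α - 1| = |f' t - α| / α := by
        rw [div_sub_one hα0, abs_div, abs_of_pos hαpos]
      have hl := hlip t (hsub ht)
      calc |c t| ≤ 2 * |f' t/α - 1| := hlog
        _ = 2 * (|f' t - α|/α) := by rw [habs]
        _ ≤ 2 * ((C*t)/α) := by gcongr
        _ = K * t := by rw [hKdef]; field_simp
    obtain ⟨U, hUc, hU0, hUshift⟩ := sternberg_series δ K r hδpos hr0.le hr1 c f hcc hK hcb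
      (fun x hx => ((hfd x (hsub hx)).continuousWithinAt).mono hsub)
      (fun t ht => (hmapsδ t ht).1) hfup
    set cl : ℝ → ℝ := fun s => max 0 (min s δ) with hcldef
    have hclc : Continuous cl := continuous_const.max (continuous_id.min continuous_const)
    have hclmaps : ∀ s : ℝ, cl s ∈ Icc (0:ℝ) δ :=
      fun s => ⟨le_max_left _ _, max_le hδpos.le (min_le_right _ _)⟩
    have hcleq : ∀ s ∈ Icc (0:ℝ) δ, cl s = s := by
      intro s hs
      rw [hcldef]
      simp only
      rw [min_eq_left hs.2, max_eq_right hs.1]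
    set u : ℝ → ℝ := fun s => U (cl s) with hudef
    have huc : Continuous u := hUc.comp_continuous hclc hclmaps
    have hu0 : u 0 = 0 := by
      rw [hudef]; simp only; rw [hcleq 0 ⟨le_rfl, hδpos.le⟩, hU0]
    have hrel : ∀ t ∈ Icc (0:ℝ) δ, Real.exp (u (f t)) * f' t = α * Real.exp (u t) := by
      intro t ht
      have hft := hmapsδ t ht
      have hu1 : u (f t) = U (f t) := congrArg U (hcleq _ hft)
      have hu2 : u t = U t := congrArg U (hcleq t ht)
      have hshift := hUshift t ht
      have hexp : Real.exp (c t) = f' t / α :=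
        Real.exp_log (div_pos (by linarith [(hbnd t ht).1]) hαpos)
      have hUft : U (f t) = U t - c t := by linarith
      rw [hu1, hu2, hUft, Real.exp_sub, hexp]
      have hf't : f' t ≠ 0 := by have := (hbnd t ht).1; intro hz; rw [hz] at this; linarith
      field_simp
    obtain ⟨h, p1, p2, p3, p4, p5, p6⟩ := sternberg_build f f' u α δ hδpos huc hu0 hf0 hfdδ
      (hf'c.mono hsub) hrel
    exact ⟨δ, hδpos, h, p1, p2, p3, p4, p5, p6⟩
  · -- expanding case: α > 1
    set ρ : ℝ := (1+α)/2 with hρdef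
    have hρ1 : 1 < ρ := by rw [hρdef]; linarith
    have hρα : ρ < α := by rw [hρdef]; linarith
    set δ₀ : ℝ := min (ε/(2*α)) ((α-ρ)/((C+1)*(2*α))) with hδ₀def
    have hδ₀pos : 0 < δ₀ :=
      lt_min (by positivity) (div_pos (by linarith) (by positivity))
    set b : ℝ := 2*α*δ₀ with hbdef
    have hbpos : 0 < b := by positivity
    have hbε : b ≤ ε := by
      have h1 : δ₀ ≤ ε/(2*α) := min_le_left _ _
      have h2 : 2*α*δ₀ ≤ 2*α*(ε/(2*α)) := mul_le_mul_of_nonneg_left h1 (by positivity)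
      have h3 : 2*α*(ε/(2*α)) = ε := by field_simp
      rw [hbdef]; linarith
    have hCreg : ∀ s ∈ Icc (0:ℝ) b, C * s ≤ α - ρ := by
      intro s hs
      have h1 : δ₀ ≤ (α-ρ)/((C+1)*(2*α)) := min_le_right _ _
      have h2 : 2*α*((α-ρ)/((C+1)*(2*α))) = (α-ρ)/(C+1) := by
        field_simp
      have h3 : s ≤ (α-ρ)/(C+1) := by
        rw [← h2]
        calc s ≤ b := hs.2
          _ ≤ 2*α*((α-ρ)/((C+1)*(2*α))) := by
              rw [hbdef]; exact mul_le_mul_of_nonneg_left h1 (by positivity)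
      calc C * s ≤ C * ((α-ρ)/(C+1)) := mul_le_mul_of_nonneg_left h3 hC
        _ ≤ α - ρ := hkey _ (by linarith)
    have hsubb : Icc (0:ℝ) b ⊆ Icc 0 ε := Icc_subset_Icc_right hbε
    have hbnd : ∀ s ∈ Icc (0:ℝ) b, ρ ≤ f' s ∧ f' s ≤ 2*α - ρ := by
      intro s hs
      have h2 := abs_le.mp (hlip s (hsubb hs))
      have h3 := hCreg s hs
      constructor <;> linarith
    have hfdb : ∀ t ∈ Icc (0:ℝ) b, HasDerivWithinAt f (f' t) (Icc 0 b) t :=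
      fun t ht => (hfd t (hsubb ht)).mono hsubb
    have hflow : ∀ t ∈ Icc (0:ℝ) b, ρ * t ≤ f t := by
      intro t ht
      have := sternberg_lin_bound f f' b ρ hbpos hfdb (fun s hs => (hbnd s hs).1) t ht
      rw [hf0] at this; linarith
    have hfup : ∀ t ∈ Icc (0:ℝ) b, f t ≤ (2*α-ρ) * t := by
      intro t ht
      have hneg : ∀ x ∈ Icc (0:ℝ) b, HasDerivWithinAt (fun y => -f y) (-(f' x)) (Icc 0 b) x :=
        fun x hx => (hfdb x hx).neg
      have := sternberg_lin_bound (fun y => -f y) (fun y => -(f' y)) b (-(2*α-ρ)) hbpos hneg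
        (fun s hs => by show -(2*α-ρ) ≤ -(f' s); linarith [(hbnd s hs).2]) t ht
      simp only [hf0, neg_zero, zero_add] at this
      linarith
    have hδ₀b : δ₀ ∈ Icc (0:ℝ) b := ⟨hδ₀pos.le, by rw [hbdef]; nlinarith⟩
    set β : ℝ := f δ₀ with hβdef
    have hβlow : ρ * δ₀ ≤ β := hflow δ₀ hδ₀b
    have hβup : β ≤ (2*α-ρ)*δ₀ := hfup δ₀ hδ₀b
    have hβpos : 0 < β := lt_of_lt_of_le (by positivity) hβlow
    have hδ₀β : δ₀ ≤ β := le_trans (by nlinarith) hβlow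
    have hβb : β ≤ b := by rw [hbdef]; nlinarith
    have hsubJb : Icc (0:ℝ) β ⊆ Icc 0 b := Icc_subset_Icc_right hβb
    have hsubJ : Icc (0:ℝ) β ⊆ Icc 0 ε := hsubJb.trans hsubb
    have hsub0b : Icc (0:ℝ) δ₀ ⊆ Icc 0 b := Icc_subset_Icc_right hδ₀b.2
    have hfcontb : ContinuousOn f (Icc 0 b) := fun x hx => (hfdb x hx).continuousWithinAt
    have hfmono : StrictMonoOn f (Icc 0 b) := by
      apply strictMonoOn_of_deriv_pos (convex_Icc 0 b) hfcontb
      rw [interior_Icc]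
      intro x hx
      have hxm : x ∈ Icc (0:ℝ) b := ⟨hx.1.le, hx.2.le⟩
      rw [((hfdb x hxm).hasDerivAt (Icc_mem_nhds hx.1 hx.2)).deriv]
      linarith [(hbnd x hxm).1]
    have hIVT : Icc (0:ℝ) β ⊆ f '' Icc 0 δ₀ := by
      have := intermediate_value_Icc hδ₀pos.le (hfcontb.mono hsub0b)
      rwa [hf0] at this
    set g : ℝ → ℝ := Function.invFunOn f (Icc 0 δ₀) with hgdef
    have hinj0 : InjOn f (Icc 0 δ₀) := (hfmono.mono hsub0b).injOn
    have hgmem : ∀ y ∈ Icc (0:ℝ) β, g y ∈ Icc (0:ℝ) δ₀ := by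
      intro y hy
      obtain ⟨a, ha, hfa⟩ := hIVT hy
      exact Function.invFunOn_mem ⟨a, ha, hfa⟩
    have hgeq : ∀ y ∈ Icc (0:ℝ) β, f (g y) = y := by
      intro y hy
      obtain ⟨a, ha, hfa⟩ := hIVT hy
      exact Function.invFunOn_eq ⟨a, ha, hfa⟩
    have hgf : ∀ t ∈ Icc (0:ℝ) δ₀, g (f t) = t := fun t ht => hinj0.leftInvOn_invFunOn ht
    have hgle : ∀ y ∈ Icc (0:ℝ) β, g y ≤ ρ⁻¹ * y := by
      intro y hy
      have h1 : ρ * g y ≤ f (g y) := hflow _ (hsub0b (hgmem y hy))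
      rw [hgeq y hy] at h1
      rw [inv_mul_eq_div, le_div_iff₀ (by linarith : (0:ℝ) < ρ)]
      linarith
    have hgmono : MonotoneOn g (Icc 0 β) := by
      intro y1 hy1 y2 hy2 hle
      by_contra hgt
      push_neg at hgt
      have := hfmono (hsub0b (hgmem y2 hy2)) (hsub0b (hgmem y1 hy1)) hgt
      rw [hgeq y1 hy1, hgeq y2 hy2] at this
      linarith
    set G : ℝ → ℝ := fun y => if y < 0 then y else if y ≤ β then g y else y - β + δ₀ with hGdef
    have hGg : EqOn G g (Icc 0 β) := by
      intro y hy
      simp only [hGdef]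
      rw [if_neg (not_lt.mpr hy.1), if_pos hy.2]
    have hGmono : Monotone G := by
      intro y1 y2 hle
      rcases lt_or_ge y1 0 with h1 | h1
      · rcases lt_or_ge y2 0 with h2 | h2
        · simp only [hGdef, if_pos h1, if_pos h2]; exact hle
        · rcases le_or_gt y2 β with h3 | h3
          · simp only [hGdef, if_pos h1, if_neg (not_lt.mpr h2), if_pos h3]
            linarith [(hgmem y2 ⟨h2, h3⟩).1]
          · simp only [hGdef, if_pos h1, if_neg (not_lt.mpr h2), if_neg (not_le.mpr h3)]
            linarith
      · rcases le_or_gt y1 β with h3 | h3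
        · have h2 : (0:ℝ) ≤ y2 := le_trans h1 hle
          rcases le_or_gt y2 β with h4 | h4
          · simp only [hGdef, if_neg (not_lt.mpr h1), if_pos h3,
              if_neg (not_lt.mpr h2), if_pos h4]
            exact hgmono ⟨h1, h3⟩ ⟨h2, h4⟩ hle
          · simp only [hGdef, if_neg (not_lt.mpr h1), if_pos h3,
              if_neg (not_lt.mpr h2), if_neg (not_le.mpr h4)]
            have := (hgmem y1 ⟨h1, h3⟩).2
            linarith
        · have h2 : (0:ℝ) ≤ y2 := le_trans h1 hle
          have h4 : β < y2 := lt_of_lt_of_le h3 hle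
          simp only [hGdef, if_neg (not_lt.mpr h1), if_neg (not_le.mpr h3),
            if_neg (not_lt.mpr h2), if_neg (not_le.mpr h4)]
          linarith
    have hGsurj : Function.Surjective G := by
      intro z
      rcases lt_or_ge z 0 with h1 | h1
      · exact ⟨z, by simp only [hGdef, if_pos h1]⟩
      · rcases le_or_gt z δ₀ with h2 | h2
        · refine ⟨f z, ?_⟩
          have hz : z ∈ Icc (0:ℝ) δ₀ := ⟨h1, h2⟩
          have hfz1 : 0 ≤ f z := le_trans (by nlinarith) (hflow z (hsub0b hz))
          have hfz2 : f z ≤ β := by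
            rcases eq_or_lt_of_le h2 with he | hlt2
            · rw [he]
            · have := hfmono (hsub0b hz) hδ₀b hlt2
              rw [← hβdef] at this
              exact this.le
          rw [hGdef]
          simp only [if_neg (not_lt.mpr hfz1), if_pos hfz2]
          exact hgf z hz
        · refine ⟨z - δ₀ + β, ?_⟩
          have h3 : ¬(z - δ₀ + β < 0) := by push_neg; nlinarith
          have h4 : ¬(z - δ₀ + β ≤ β) := by push_neg; linarith
          rw [hGdef]
          simp only [if_neg h3, if_neg h4]
          ring
    have hGc : Continuous G := hGmono.continuous_of_surjective hGsurj
    have hgc : ContinuousOn g (Icc 0 β) := hGc.continuousOn.congr (fun y hy => (hGg hy).symm)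
    set c : ℝ → ℝ := fun s => Real.log (f' s / α) with hcdef
    have hcc : ContinuousOn c (Icc 0 β) :=
      ContinuousOn.log ((hf'c.mono hsubJ).div_const α)
        (fun s hs => div_ne_zero (by linarith [(hbnd s (hsubJb hs)).1]) hα0)
    set K : ℝ := 2*C/α with hKdef
    have hK : 0 ≤ K := by positivity
    have hcb : ∀ t ∈ Icc (0:ℝ) β, |c t| ≤ K * t := by
      intro t ht
      have hb2 := hbnd t (hsubJb ht)
      have hhalf : 1/2 ≤ f' t / α := by
        rw [le_div_iff₀ hαpos]; rw [hρdef] at hb2; linarith [hb2.1]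
      have hlog := sternberg_abs_log _ hhalf
      have habs : |f' t / α - 1| = |f' t - α| / α := by
        rw [div_sub_one hα0, abs_div, abs_of_pos hαpos]
      have hl := hlip t (hsubJ ht)
      calc |c t| ≤ 2 * |f' t/α - 1| := hlog
        _ = 2 * (|f' t - α|/α) := by rw [habs]
        _ ≤ 2 * ((C*t)/α) := by gcongr
        _ = K * t := by rw [hKdef]; field_simp
    have hρinv0 : (0:ℝ) ≤ ρ⁻¹ := by positivity
    have hρinv1 : ρ⁻¹ < 1 := by
      rw [inv_lt_one_iff₀]; right; exact hρ1
    obtain ⟨U, hUc, hU0, hUshift⟩ := sternberg_series β K ρ⁻¹ hβpos hρinv0 hρinv1 c g hcc hK hcb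
      hgc (fun y hy => (hgmem y hy).1) hgle
    set cl : ℝ → ℝ := fun s => max 0 (min s β) with hcldef
    have hclc : Continuous cl := continuous_const.max (continuous_id.min continuous_const)
    have hclmaps : ∀ s : ℝ, cl s ∈ Icc (0:ℝ) β :=
      fun s => ⟨le_max_left _ _, max_le hβpos.le (min_le_right _ _)⟩
    have hcleq : ∀ s ∈ Icc (0:ℝ) β, cl s = s := by
      intro s hs
      rw [hcldef]
      simp only
      rw [min_eq_left hs.2, max_eq_right hs.1]
    set u : ℝ → ℝ := fun s => -U (g (cl s)) with hudef
    have hgmaps : MapsTo g (Icc (0:ℝ) β) (Icc (0:ℝ) β) :=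
      fun y hy => ⟨(hgmem y hy).1, (hgmem y hy).2.trans hδ₀β⟩
    have hgUc : ContinuousOn (fun y => U (g y)) (Icc 0 β) := hUc.comp hgc hgmaps
    have huc : Continuous u := ((hgUc.comp_continuous hclc hclmaps)).neg
    have hg0 : g 0 = 0 := by
      have h1 := hgle 0 ⟨le_rfl, hβpos.le⟩
      have h2 := (hgmem 0 ⟨le_rfl, hβpos.le⟩).1
      simp only [mul_zero] at h1
      linarith
    have hu0 : u 0 = 0 := by
      rw [hudef]
      simp only
      rw [hcleq 0 ⟨le_rfl, hβpos.le⟩, hg0, hU0, neg_zero]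
    have hsub0ε : Icc (0:ℝ) δ₀ ⊆ Icc 0 ε := hsub0b.trans hsubb
    have hfd0 : ∀ t ∈ Icc (0:ℝ) δ₀, HasDerivWithinAt f (f' t) (Icc 0 δ₀) t :=
      fun t ht => (hfd t (hsub0ε ht)).mono hsub0ε
    have hmaps0 : ∀ t ∈ Icc (0:ℝ) δ₀, f t ∈ Icc (0:ℝ) β := by
      intro t ht
      constructor
      · exact le_trans (by nlinarith [ht.1]) (hflow t (hsub0b ht))
      · rcases eq_or_lt_of_le ht.2 with he | hlt2
        · rw [he]
        · have := hfmono (hsub0b ht) hδ₀b hlt2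
          rw [← hβdef] at this
          exact this.le
    have hrel : ∀ t ∈ Icc (0:ℝ) δ₀, Real.exp (u (f t)) * f' t = α * Real.exp (u t) := by
      intro t ht
      have htβ : t ∈ Icc (0:ℝ) β := ⟨ht.1, ht.2.trans hδ₀β⟩
      have hftβ := hmaps0 t ht
      have hu1 : u (f t) = -U t := by
        rw [hudef]
        simp only
        rw [hcleq _ hftβ, hgf t ht]
      have hu2 : u t = -(U t - c t) := by
        rw [hudef]
        simp only
        rw [hcleq _ htβ]
        have h1 := hUshift t htβ
        have h2 : U (g t) = U t - c t := by linarith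
        rw [h2]
      have hf'pos : 0 < f' t := by linarith [(hbnd t (hsubJb htβ)).1]
      have hexp : Real.exp (c t) = f' t / α :=
        Real.exp_log (div_pos hf'pos hαpos)
      rw [hu1, hu2, neg_sub, Real.exp_sub, Real.exp_neg, hexp]
      field_simp
    obtain ⟨h, p1, p2, p3, p4, p5, p6⟩ := sternberg_build f f' u α δ₀ hδ₀pos huc hu0 hf0 hfd0
      (hf'c.mono hsub0ε) hrel
    exact ⟨δ₀, hδ₀pos, h, p1, p2, p3, p4, p5, p6⟩
end
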